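/- arXiv:1304.3288 — 5 statements merged into one kernel-verified Lean document; each statement's English description precedes it below -/
import Mathlib

section
/- Suppose X, Y : [0,T] → V are continuous functions satisfying X_t = ∫_0^t S_{t−s} F(X_s) ds + O_t and Y_t = ∫_0^t S_{t−s} F(Y_s) ds + O_t for every t ∈ [0,T]. Then X_t = Y_t for all t ∈ [0,T]. -/
open Set

open MeasureTheory intervalIntegral

/-- Joint continuity of a strongly continuous, locally bounded operator family. -/
theorem joint_cont
    {V W : Type*} [NormedAddCommGroup V] [NormedSpace ℝ V]
    [NormedAddCommGroup W] [NormedSpace ℝ W]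
    (T : ℝ) (α : ℝ) (hα0 : 0 ≤ α)
    (S : ℝ → W →L[ℝ] V)
    (hScont : ∀ w : W, ContinuousOn (fun t => S t w) (Ioc 0 T))
    (C : ℝ) (hC : ∀ t ∈ Ioc (0:ℝ) T, t ^ α * ‖S t‖ ≤ C) :
    ContinuousOn (fun p : ℝ × W => S p.1 p.2) ((Ioc 0 T) ×ˢ (univ : Set W)) := by
  rintro ⟨s0, w0⟩ ⟨hs0, -⟩
  have hs0pos : 0 < s0 := hs0.1
  -- decompose
  have h1 : ContinuousWithinAt (fun p : ℝ × W => S p.1 w0) ((Ioc 0 T) ×ˢ (univ : Set W)) (s0, w0) := by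
    exact (hScont w0 s0 hs0).comp (x := (s0, w0)) continuous_fst.continuousWithinAt (fun q (hq : q ∈ (Ioc 0 T) ×ˢ (univ : Set W)) => hq.1)
  have h2 : Filter.Tendsto (fun p : ℝ × W => S p.1 (p.2 - w0))
      (nhdsWithin (s0, w0) ((Ioc 0 T) ×ˢ (univ : Set W))) (nhds 0) := by
    set K : ℝ := C / (s0 / 2) ^ α with hK
    refine squeeze_zero_norm' (a := fun p : ℝ × W => K * ‖p.2 - w0‖) ?_ ?_
    · -- eventually bound
      have hev : ∀ᶠ p : ℝ × W in nhdsWithin (s0, w0) ((Ioc 0 T) ×ˢ (univ : Set W)),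
          s0 / 2 < p.1 := by
        apply Filter.eventually_iff_exists_mem.2
        refine ⟨{p : ℝ × W | s0 / 2 < p.1} ∩ (Ioc 0 T) ×ˢ (univ : Set W), ?_, fun p hp => hp.1⟩
        exact Filter.inter_mem (nhdsWithin_le_nhds
          ((isOpen_lt continuous_const continuous_fst).mem_nhds (by simpa using half_lt_self hs0pos)))
          self_mem_nhdsWithin
      have hevmem : ∀ᶠ p : ℝ × W in nhdsWithin (s0, w0) ((Ioc 0 T) ×ˢ (univ : Set W)),
          p ∈ (Ioc 0 T) ×ˢ (univ : Set W) := self_mem_nhdsWithin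
      filter_upwards [hev, hevmem] with p hp hpm
      have hp1 : p.1 ∈ Ioc (0:ℝ) T := hpm.1
      have hSnorm : ‖S p.1‖ ≤ K := by
        have h' := hC p.1 hp1
        have hpow : (s0 / 2) ^ α ≤ p.1 ^ α :=
          Real.rpow_le_rpow (by positivity) hp.le hα0
        have hpospow : (0:ℝ) < (s0 / 2) ^ α := Real.rpow_pos_of_pos (by positivity) α
        have hppow : (0:ℝ) < p.1 ^ α := Real.rpow_pos_of_pos hp1.1 α
        rw [hK, le_div_iff₀ hpospow]
        calc ‖S p.1‖ * (s0/2) ^ α ≤ ‖S p.1‖ * p.1 ^ α := by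
              exact mul_le_mul_of_nonneg_left hpow (norm_nonneg _)
          _ ≤ C := by rw [mul_comm]; exact h'
      calc ‖S p.1 (p.2 - w0)‖ ≤ ‖S p.1‖ * ‖p.2 - w0‖ := (S p.1).le_opNorm _
        _ ≤ K * ‖p.2 - w0‖ := by
            exact mul_le_mul_of_nonneg_right hSnorm (norm_nonneg _)
    · have : Filter.Tendsto (fun p : ℝ × W => K * ‖p.2 - w0‖) (nhds (s0, w0)) (nhds (K * ‖w0 - w0‖)) := by
        exact (Filter.Tendsto.norm ((continuous_snd.tendsto _).sub tendsto_const_nhds)).const_mul K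
      simpa using this.mono_left nhdsWithin_le_nhds
  have h2' : ContinuousWithinAt (fun p : ℝ × W => S p.1 (p.2 - w0)) ((Ioc 0 T) ×ˢ (univ : Set W)) (s0, w0) := by
    have hz : S (s0, w0).1 ((s0, w0).2 - w0) = 0 := by simp
    unfold ContinuousWithinAt
    simpa using h2
  have hsum := h1.add h2'
  have heq : (fun p : ℝ × W => S p.1 w0 + S p.1 (p.2 - w0)) = fun p : ℝ × W => S p.1 p.2 := by
    funext p
    rw [← map_add]
    congr 1
    abel
  rw [← heq]; exact hsum


theorem rpow_kernel_integrable (t α : ℝ) (hα1 : α < 1) :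
    IntervalIntegrable (fun s => (t - s) ^ (-α)) volume 0 t := by
  have h : IntervalIntegrable (fun x : ℝ => x ^ (-α)) volume t 0 :=
    intervalIntegrable_rpow' (by linarith)
  simpa using h.comp_sub_left t

theorem integrand_integrable
    {V W : Type*} [NormedAddCommGroup V] [NormedSpace ℝ V]
    [NormedAddCommGroup W] [NormedSpace ℝ W]
    (T : ℝ) (α : ℝ) (hα0 : 0 ≤ α) (hα1 : α < 1)
    (S : ℝ → W →L[ℝ] V)
    (hScont : ∀ w : W, ContinuousOn (fun t => S t w) (Ioc 0 T))
    (C : ℝ) (hC : ∀ t ∈ Ioc (0:ℝ) T, t ^ α * ‖S t‖ ≤ C)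
    (t : ℝ) (ht : t ∈ Ioc (0:ℝ) T)
    (G : ℝ → W) (hG : ContinuousOn G (Icc 0 T))
    (B : ℝ) (hB : ∀ s ∈ Icc (0:ℝ) T, ‖G s‖ ≤ B) :
    IntervalIntegrable (fun s => S (t - s) (G s)) volume 0 t := by
  have hsub : Ico (0:ℝ) t ⊆ Icc 0 T := fun s hs => ⟨hs.1, le_trans hs.2.le ht.2⟩
  have hcont : ContinuousOn (fun s => S (t - s) (G s)) (Ico 0 t) := by
    have hpair : ContinuousOn (fun s => ((t - s, G s) : ℝ × W)) (Ico 0 t) :=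
      ((continuous_const.sub continuous_id).continuousOn).prodMk (hG.mono hsub)
    have hmaps : MapsTo (fun s => ((t - s, G s) : ℝ × W)) (Ico 0 t)
        ((Ioc 0 T) ×ˢ (univ : Set W)) := by
      intro s hs
      simp only [mem_prod, mem_Ioc, mem_univ, and_true]
      constructor <;> linarith [hs.1, hs.2, ht.2]
    exact (joint_cont T α hα0 S hScont C hC).comp hpair hmaps
  rw [intervalIntegrable_iff_integrableOn_Ioo_of_le ht.1.le]
  have hker : IntegrableOn (fun s => C * B * (t - s) ^ (-α)) (Ioo 0 t) volume := by
    have := ((rpow_kernel_integrable t α hα1).const_mul (C * B))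
    exact ((intervalIntegrable_iff_integrableOn_Ioo_of_le ht.1.le).1 this)
  apply hker.mono' ((hcont.mono Ioo_subset_Ico_self).aestronglyMeasurable measurableSet_Ioo)
  refine (ae_restrict_iff' measurableSet_Ioo).2 (Filter.Eventually.of_forall fun s hs => ?_)
  have hts : 0 < t - s := by linarith [hs.2]
  have hSn : ‖S (t - s)‖ ≤ C * (t - s) ^ (-α) := by
    have h1 := hC (t - s) ⟨hts, by linarith [hs.1, ht.2]⟩
    have hp : (0:ℝ) < (t - s) ^ α := Real.rpow_pos_of_pos hts α
    rw [Real.rpow_neg hts.le]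
    rw [← le_div_iff₀' hp] at h1
    simpa [div_eq_mul_inv] using h1
  have hGB : ‖G s‖ ≤ B := hB s (hsub ⟨hs.1.le, hs.2⟩)
  calc ‖S (t - s) (G s)‖ ≤ ‖S (t - s)‖ * ‖G s‖ := (S (t-s)).le_opNorm _
    _ ≤ (C * (t - s) ^ (-α)) * B :=
        mul_le_mul hSn hGB (norm_nonneg _) (le_trans (norm_nonneg _) hSn)
    _ = C * B * (t - s) ^ (-α) := by ring


/-- **pathwise uniqueness.** In the abstract setting (semigroup `S` with
`sup_{t∈(0,T]} t^α ‖S_t‖ < ∞`, nonlinearity `F` Lipschitz on bounded sets, continuous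
forcing `O`), any two continuous functions `X, Y : [0,T] → V` satisfying
`X_t = ∫_0^t S_{t−s} F(X_s) ds + O_t` and `Y_t = ∫_0^t S_{t−s} F(Y_s) ds + O_t`
coincide on `[0,T]`. -/
theorem stmt_1
    {V W : Type*} [NormedAddCommGroup V] [NormedSpace ℝ V] [CompleteSpace V]
    [NormedAddCommGroup W] [NormedSpace ℝ W]
    (T : ℝ) (hT : 0 < T)
    (α : ℝ) (hα0 : 0 ≤ α) (hα1 : α < 1)
    (S : ℝ → W →L[ℝ] V)
    (hScont : ∀ w : W, ContinuousOn (fun t => S t w) (Ioc 0 T))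
    (hSbound : ∃ C : ℝ, ∀ t ∈ Ioc (0:ℝ) T, t ^ α * ‖S t‖ ≤ C)
    (F : V → W)
    (hF : ∀ r : ℝ, 0 < r → ∃ L : ℝ, ∀ v w : V, ‖v‖ ≤ r → ‖w‖ ≤ r →
      ‖F v - F w‖ ≤ L * ‖v - w‖)
    (O : ℝ → V) (hO : ContinuousOn O (Icc 0 T))
    (X Y : ℝ → V)
    (hXcont : ContinuousOn X (Icc 0 T)) (hYcont : ContinuousOn Y (Icc 0 T))
    (hXeq : ∀ t ∈ Icc (0:ℝ) T, X t = (∫ s in (0:ℝ)..t, S (t - s) (F (X s))) + O t)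
    (hYeq : ∀ t ∈ Icc (0:ℝ) T, Y t = (∫ s in (0:ℝ)..t, S (t - s) (F (Y s))) + O t) :
    ∀ t ∈ Icc (0:ℝ) T, X t = Y t := by
  obtain ⟨C, hC⟩ := hSbound
  have hC0 : 0 ≤ C := le_trans (by positivity) (hC T ⟨hT, le_refl T⟩)
  obtain ⟨r1, hr1⟩ := isCompact_Icc.exists_bound_of_continuousOn hXcont
  obtain ⟨r2, hr2⟩ := isCompact_Icc.exists_bound_of_continuousOn hYcont
  set r : ℝ := max 1 (max r1 r2) with hrdef
  have hr0 : (0:ℝ) < r := lt_of_lt_of_le one_pos (le_max_left _ _)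
  have hXr : ∀ s ∈ Icc (0:ℝ) T, ‖X s‖ ≤ r := fun s hs =>
    le_trans (hr1 s hs) (le_trans (le_max_left _ _) (le_max_right _ _))
  have hYr : ∀ s ∈ Icc (0:ℝ) T, ‖Y s‖ ≤ r := fun s hs =>
    le_trans (hr2 s hs) (le_trans (le_max_right _ _) (le_max_right _ _))
  obtain ⟨L0, hL0⟩ := hF r hr0
  set L : ℝ := max L0 0 with hLdef
  have hL0' : (0:ℝ) ≤ L := le_max_right _ _
  have hL : ∀ v w : V, ‖v‖ ≤ r → ‖w‖ ≤ r → ‖F v - F w‖ ≤ L * ‖v - w‖ := by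
    intro v w hv hw
    exact le_trans (hL0 v w hv hw)
      (mul_le_mul_of_nonneg_right (le_max_left _ _) (norm_nonneg _))
  -- F is Lipschitz (hence continuous) on the ball of radius r
  have hFlip : LipschitzOnWith (Real.toNNReal L) F {v : V | ‖v‖ ≤ r} := by
    apply LipschitzOnWith.of_dist_le_mul
    intro v hv w hw
    rw [dist_eq_norm, dist_eq_norm, Real.coe_toNNReal L hL0']
    exact hL v w hv hw
  have hFXcont : ContinuousOn (fun s => F (X s)) (Icc 0 T) :=
    hFlip.continuousOn.comp hXcont (fun s hs => hXr s hs)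
  have hFYcont : ContinuousOn (fun s => F (Y s)) (Icc 0 T) :=
    hFlip.continuousOn.comp hYcont (fun s hs => hYr s hs)
  set B : ℝ := L * r + ‖F 0‖ with hBdef
  have hnorm0 : ‖(0:V)‖ ≤ r := by simpa using hr0.le
  have hFbound : ∀ v : V, ‖v‖ ≤ r → ‖F v‖ ≤ B := by
    intro v hv
    calc ‖F v‖ ≤ ‖F v - F 0‖ + ‖F 0‖ := by
          simpa using norm_add_le (F v - F 0) (F 0)
      _ ≤ L * ‖v - 0‖ + ‖F 0‖ := by linarith [hL v 0 hv hnorm0]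
      _ ≤ L * r + ‖F 0‖ := by
          simp only [sub_zero]
          have := mul_le_mul_of_nonneg_left hv hL0'
          linarith
  have hFXb : ∀ s ∈ Icc (0:ℝ) T, ‖F (X s)‖ ≤ B := fun s hs => hFbound _ (hXr s hs)
  have hFYb : ∀ s ∈ Icc (0:ℝ) T, ‖F (Y s)‖ ≤ B := fun s hs => hFbound _ (hYr s hs)
  have hXint : ∀ t ∈ Ioc (0:ℝ) T,
      IntervalIntegrable (fun s => S (t - s) (F (X s))) volume 0 t := fun t ht =>
    integrand_integrable T α hα0 hα1 S hScont C hC t ht _ hFXcont B hFXb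
  have hYint : ∀ t ∈ Ioc (0:ℝ) T,
      IntervalIntegrable (fun s => S (t - s) (F (Y s))) volume 0 t := fun t ht =>
    integrand_integrable T α hα0 hα1 S hScont C hC t ht _ hFYcont B hFYb
  -- choose the step size δ
  have h1α : (0:ℝ) < 1 - α := by linarith
  set K : ℝ := C * L / (1 - α) with hKdef
  have hK0 : 0 ≤ K := by positivity
  set δ : ℝ := min T ((1 / (2 * (K + 1))) ^ ((1:ℝ) / (1 - α))) with hδdef
  have hδ0 : 0 < δ := lt_min hT (Real.rpow_pos_of_pos (by positivity) _)
  have hδkey : K * δ ^ (1 - α) ≤ 1 / 2 := by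
    have h1 : δ ^ (1 - α) ≤ ((1 / (2 * (K + 1))) ^ ((1:ℝ) / (1 - α))) ^ (1 - α) :=
      Real.rpow_le_rpow hδ0.le (min_le_right _ _) h1α.le
    have h2 : ((1 / (2 * (K + 1))) ^ ((1:ℝ) / (1 - α))) ^ (1 - α) = 1 / (2 * (K + 1)) := by
      rw [← Real.rpow_mul (by positivity), one_div_mul_cancel (ne_of_gt h1α), Real.rpow_one]
    calc K * δ ^ (1 - α) ≤ K * (1 / (2 * (K + 1))) :=
          mul_le_mul_of_nonneg_left (h1.trans_eq h2) hK0
      _ ≤ 1 / 2 := by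
          rw [mul_one_div, div_le_div_iff₀ (by positivity) (by norm_num)]
          linarith
  -- base case
  have base : X 0 = Y 0 := by
    rw [hXeq 0 ⟨le_refl 0, hT.le⟩, hYeq 0 ⟨le_refl 0, hT.le⟩]
    simp [integral_same]
  -- key step: propagate equality over an interval of length ≤ δ
  have key : ∀ a b : ℝ, 0 ≤ a → a ≤ b → b ≤ T → b - a ≤ δ →
      (∀ s ∈ Icc (0:ℝ) a, X s = Y s) → ∀ s ∈ Icc (0:ℝ) b, X s = Y s := by
    intro a b ha hab hbT hba hprev
    have hsubT : Icc a b ⊆ Icc (0:ℝ) T := fun s hs => ⟨le_trans ha hs.1, le_trans hs.2 hbT⟩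
    have hgcont : ContinuousOn (fun s => ‖X s - Y s‖) (Icc a b) :=
      ((hXcont.mono hsubT).sub (hYcont.mono hsubT)).norm
    obtain ⟨u, hu, hmax⟩ := isCompact_Icc.exists_isMaxOn (nonempty_Icc.2 hab) hgcont
    set M : ℝ := ‖X u - Y u‖ with hMdef
    have hM0 : 0 ≤ M := norm_nonneg _
    have hMle : M ≤ 0 := by
      rcases eq_or_lt_of_le hu.1 with hua | hau
      · -- u = a: equality by hypothesis
        rw [hMdef, ← hua, hprev a ⟨ha, le_refl a⟩, sub_self, norm_zero]
      · -- a < u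
        have hu0 : 0 < u := lt_of_le_of_lt ha hau
        have huT : u ≤ T := le_trans hu.2 hbT
        have huIoc : u ∈ Ioc (0:ℝ) T := ⟨hu0, huT⟩
        have huIcc : u ∈ Icc (0:ℝ) T := ⟨hu0.le, huT⟩
        set ψ : ℝ → V := fun s => S (u - s) (F (X s)) - S (u - s) (F (Y s)) with hψdef
        have hintX := hXint u huIoc
        have hintY := hYint u huIoc
        have hintψ : IntervalIntegrable ψ volume 0 u := hintX.sub hintY
        have hdiff : X u - Y u = ∫ s in (0:ℝ)..u, ψ s := by
          rw [hXeq u huIcc, hYeq u huIcc, hψdef, integral_sub hintX hintY]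
          abel
        have hsub0a : uIcc (0:ℝ) a ⊆ uIcc (0:ℝ) u := by
          rw [uIcc_of_le ha, uIcc_of_le hu0.le]
          exact Icc_subset_Icc (le_refl 0) hau.le
        have hsubau : uIcc a u ⊆ uIcc (0:ℝ) u := by
          rw [uIcc_of_le hau.le, uIcc_of_le hu0.le]
          exact Icc_subset_Icc ha (le_refl u)
        have hint0a : IntervalIntegrable ψ volume 0 a := hintψ.mono_set hsub0a
        have hintau : IntervalIntegrable ψ volume a u := hintψ.mono_set hsubau
        have hzero : (∫ s in (0:ℝ)..a, ψ s) = 0 := by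
          rw [integral_congr (g := fun _ => (0:V))]
          · simp
          · intro s hs
            rw [uIcc_of_le ha] at hs
            simp only [hψdef, hprev s hs, sub_self]
        have hsplit : X u - Y u = ∫ s in a..u, ψ s := by
          rw [hdiff, ← integral_add_adjacent_intervals hint0a hintau, hzero,
            zero_add]
        -- kernel integrability on a..u
        have hkerau : IntervalIntegrable (fun s => C * L * M * (u - s) ^ (-α)) volume a u := by
          have h' : IntervalIntegrable (fun x : ℝ => x ^ (-α)) volume (u - a) 0 :=
            intervalIntegrable_rpow' (by linarith)
          have := (h'.comp_sub_left u).const_mul (C * L * M)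
          simpa using this
        have hbound : ‖∫ s in a..u, ψ s‖ ≤ |∫ s in a..u, C * L * M * (u - s) ^ (-α)| := by
          apply norm_integral_le_abs_of_norm_le _ hkerau
          have hne : ∀ᵐ s ∂volume.restrict (uIoc a u), s ≠ u :=
            MeasureTheory.ae_restrict_of_ae (by
              rw [MeasureTheory.ae_iff]
              simpa using measure_singleton u)
          filter_upwards [MeasureTheory.self_mem_ae_restrict measurableSet_uIoc, hne]
            with s hs hsne
          rw [uIoc_of_le hau.le] at hs
          have hsu : s < u := lt_of_le_of_ne hs.2 hsne
          have hus : 0 < u - s := by linarith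
          have hsIcc : s ∈ Icc (0:ℝ) T := hsubT ⟨hs.1.le, le_trans hs.2 hu.2⟩
          have hSn : ‖S (u - s)‖ ≤ C * (u - s) ^ (-α) := by
            have h1 := hC (u - s) ⟨hus, by linarith [hs.1, huT, ha]⟩
            have hp : (0:ℝ) < (u - s) ^ α := Real.rpow_pos_of_pos hus α
            rw [← le_div_iff₀' hp] at h1
            rw [Real.rpow_neg hus.le]
            simpa [div_eq_mul_inv] using h1
          have hFd : ‖F (X s) - F (Y s)‖ ≤ L * M := by
            have hXYM : ‖X s - Y s‖ ≤ M := hmax ⟨hs.1.le, le_trans hsu.le hu.2⟩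
            calc ‖F (X s) - F (Y s)‖ ≤ L * ‖X s - Y s‖ := hL _ _ (hXr s hsIcc) (hYr s hsIcc)
              _ ≤ L * M := mul_le_mul_of_nonneg_left hXYM hL0'
          have hψs : ψ s = S (u - s) (F (X s) - F (Y s)) := by
            rw [hψdef]; simp [map_sub]
          calc ‖ψ s‖ = ‖S (u - s) (F (X s) - F (Y s))‖ := by rw [hψs]
            _ ≤ ‖S (u - s)‖ * ‖F (X s) - F (Y s)‖ := (S (u - s)).le_opNorm _
            _ ≤ (C * (u - s) ^ (-α)) * (L * M) :=
                mul_le_mul hSn hFd (norm_nonneg _) (le_trans (norm_nonneg _) hSn)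
            _ = C * L * M * (u - s) ^ (-α) := by ring
        -- compute the kernel integral
        have hcomp : (∫ s in a..u, (u - s) ^ (-α)) = (u - a) ^ (1 - α) / (1 - α) := by
          rw [integral_comp_sub_left (fun x : ℝ => x ^ (-α)) u]
          rw [sub_self]
          rw [integral_rpow (Or.inl (by linarith))]
          rw [Real.zero_rpow (by intro h; rw [← h] at h1α; linarith)]
          ring_nf
        have hval : (∫ s in a..u, C * L * M * (u - s) ^ (-α))
            = C * L * M * ((u - a) ^ (1 - α) / (1 - α)) := by
          rw [intervalIntegral.integral_const_mul, hcomp]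
        have hua_le : u - a ≤ δ := by
          have : u ≤ b := hu.2
          linarith
        have hrpow : (u - a) ^ (1 - α) ≤ δ ^ (1 - α) :=
          Real.rpow_le_rpow (by linarith) hua_le h1α.le
        have hfinal : M ≤ (1 / 2) * M := by
          have habs : |∫ s in a..u, C * L * M * (u - s) ^ (-α)|
              = C * L * M * ((u - a) ^ (1 - α) / (1 - α)) := by
            have h1 : (0:ℝ) ≤ (u - a) ^ (1 - α) := Real.rpow_nonneg (by linarith) _
            rw [hval, abs_of_nonneg (mul_nonneg (mul_nonneg (mul_nonneg hC0 hL0') hM0)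
              (div_nonneg h1 h1α.le))]
          have hM1 : M ≤ C * L * M * ((u - a) ^ (1 - α) / (1 - α)) := by
            rw [habs] at hbound
            calc M = ‖∫ s in a..u, ψ s‖ := by rw [hMdef, hsplit]
              _ ≤ C * L * M * ((u - a) ^ (1 - α) / (1 - α)) := hbound
          have hM2 : C * L * M * ((u - a) ^ (1 - α) / (1 - α)) ≤ (1 / 2) * M := by
            have hKM : C * L * ((u - a) ^ (1 - α)) / (1 - α) ≤ 1 / 2 := by
              have : K * (u - a) ^ (1 - α) ≤ K * δ ^ (1 - α) :=
                mul_le_mul_of_nonneg_left hrpow hK0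
              calc C * L * ((u - a) ^ (1 - α)) / (1 - α)
                  = K * (u - a) ^ (1 - α) := by rw [hKdef]; ring
                _ ≤ K * δ ^ (1 - α) := this
                _ ≤ 1 / 2 := hδkey
            calc C * L * M * ((u - a) ^ (1 - α) / (1 - α))
                = (C * L * ((u - a) ^ (1 - α)) / (1 - α)) * M := by ring
              _ ≤ (1 / 2) * M := mul_le_mul_of_nonneg_right hKM hM0
          linarith
        linarith
    have hM : M = 0 := le_antisymm hMle hM0
    intro s hs
    rcases le_or_gt s a with hsa | has
    · exact hprev s ⟨hs.1, hsa⟩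
    · have hsab : s ∈ Icc a b := ⟨has.le, hs.2⟩
      have := hmax hsab
      rw [hMdef] at hM
      simp only at this
      rw [hM] at this
      have : ‖X s - Y s‖ = 0 := le_antisymm this (norm_nonneg _)
      rwa [norm_sub_eq_zero_iff] at this
  -- induction on multiples of δ
  have main : ∀ n : ℕ, ∀ s ∈ Icc (0:ℝ) (min (n * δ) T), X s = Y s := by
    intro n
    induction n with
    | zero =>
      intro s hs
      have hs2 := hs.2
      simp only [Nat.cast_zero, zero_mul] at hs2
      have : s = 0 := le_antisymm (le_trans hs2 (min_le_left _ _)) hs.1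
      rw [this]
      exact base
    | succ n ih =>
      have hstep : min ((n + 1 : ℕ) * δ) T - min ((n : ℕ) * δ) T ≤ δ := by
        rcases le_total ((n : ℝ) * δ) T with h | h
        · rw [min_eq_left h]
          have : min ((n + 1 : ℕ) * δ) T ≤ ((n : ℕ) * δ) + δ := by
            apply min_le_of_left_le
            push_cast
            ring_nf
            rfl
          push_cast at this ⊢
          linarith
        · rw [min_eq_right h]
          have h2 : ((n : ℝ) * δ) ≤ ((n + 1 : ℕ) * δ) := by
            push_cast; nlinarith [hδ0.le]
          rw [min_eq_right (le_trans h h2)]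
          simpa using hδ0.le
      apply key (min ((n : ℕ) * δ) T) (min ((n + 1 : ℕ) * δ) T)
      · positivity
      · apply min_le_min _ (le_refl T)
        push_cast; nlinarith [hδ0.le]
      · exact min_le_right _ _
      · exact hstep
      · exact ih
  intro t ht
  obtain ⟨n, hn⟩ := exists_nat_ge (T / δ)
  have hTn : T ≤ (n : ℝ) * δ := by
    rw [div_le_iff₀ hδ0] at hn
    linarith
  have := main n t
  rw [min_eq_right hTn] at this
  exact this ht
end

section
/- Let T ∈ (0,∞). For every t ∈ (0,T] and every w ∈ L²((0,1),ℝ) the series (S_t w)(x) = ∑_{n=1}^∞ 2 e^{−n²π²t} (∫_0^1 w(s) sin(nπs) ds) sin(nπx) converges and defines a continuous function S_t w ∈ C([0,1],ℝ), and for every γ ∈ [0,1/2), every t ∈ (0,T], every N ∈ ℕ and every w ∈ L²((0,1),ℝ) one has ‖S_t w‖_∞ ≤ 10 (T+3) t^{−3/4} ‖w‖_{H^{−1}} and ‖S_t w − P_N(S_t w)‖_∞ ≤ 10 (T+3) t^{−(3/4 + γ/2)} N^{−γ} ‖w‖_{H^{−1}}. -/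
open MeasureTheory Real

noncomputable section

/-- The `n`-th sine Fourier coefficient `∫_0^1 w(x) sin(nπx) dx` (with the index
shift `n ↦ n+1`, so that the modes are `n = 1, 2, …`). -/
def sinCoeff (w : ℝ → ℝ) (n : ℕ) : ℝ :=
  ∫ x in (0:ℝ)..1, w x * Real.sin (((n:ℝ) + 1) * Real.pi * x)

/-- The Dirichlet heat semigroup on `(0,1)`:
`(S_t w)(x) = ∑_{n=1}^∞ 2 e^{−n²π²t} (∫_0^1 w(s) sin(nπs) ds) sin(nπx)`. -/
def heat1 (t : ℝ) (w : ℝ → ℝ) (x : ℝ) : ℝ :=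
  ∑' n : ℕ, 2 * Real.exp (-((n:ℝ) + 1) ^ 2 * Real.pi ^ 2 * t) * sinCoeff w n *
    Real.sin (((n:ℝ) + 1) * Real.pi * x)

/-- The spectral projection `(P_N v)(x) = ∑_{n=1}^N 2 (∫_0^1 sin(nπs) v(s) ds) sin(nπx)`. -/
def P1 (N : ℕ) (v : ℝ → ℝ) (x : ℝ) : ℝ :=
  ∑ n ∈ Finset.range N, 2 * sinCoeff v n * Real.sin (((n:ℝ) + 1) * Real.pi * x)

/-- The `H^{−1}((0,1),ℝ)` norm, expressed in the sine basis:
`‖w‖_{H^{−1}} = (∑_{n=1}^∞ 2 (nπ)^{−2} |∫_0^1 w(x) sin(nπx) dx|²)^{1/2}`. -/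
def Hm1norm (w : ℝ → ℝ) : ℝ :=
  Real.sqrt (∑' n : ℕ, 2 * ((((n:ℝ) + 1) * Real.pi)⁻¹) ^ 2 * (sinCoeff w n) ^ 2)

end


private lemma aux_sq_exp {x : ℝ} (hx : 0 ≤ x) : x^2 * Real.exp (-x) ≤ 4/7 := by
  have h1 : x/2 ≤ Real.exp (x/2 - 1) := by
    have := Real.add_one_le_exp (x/2 - 1); linarith
  have h2 : x^2/4 ≤ Real.exp (x - 2) := by
    have hx2 : (0:ℝ) ≤ x/2 := by linarith
    calc x^2/4 = (x/2)*(x/2) := by ring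
    _ ≤ Real.exp (x/2-1) * Real.exp (x/2-1) :=
        mul_le_mul h1 h1 hx2 (Real.exp_nonneg _)
    _ = Real.exp (x - 2) := by rw [← Real.exp_add]; ring_nf
  have he : (7:ℝ) ≤ Real.exp 2 := by
    have h := Real.exp_one_gt_d9
    have h2 : Real.exp 2 = (Real.exp 1)^2 := by
      rw [← Real.exp_nat_mul]; norm_num
    nlinarith
  have hkey : Real.exp (x-2) = Real.exp x * Real.exp (-2) := by
    rw [← Real.exp_add]; ring_nf
  have hnn : x^2 * Real.exp (-x) ≤ 4 * Real.exp (-2) := by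
    rw [hkey] at h2
    have hex : (0:ℝ) < Real.exp x := Real.exp_pos x
    rw [Real.exp_neg x, mul_inv_le_iff₀ hex]
    nlinarith [Real.exp_pos (-2)]
  have hlast : Real.exp (-2) ≤ 1/7 := by
    rw [Real.exp_neg]
    rw [inv_le_comm₀ (Real.exp_pos 2) (by norm_num)]
    linarith
  nlinarith [sq_nonneg x]

private lemma aux_rpow_exp {γ x : ℝ} (hγ0 : 0 ≤ γ) (hγ1 : γ ≤ 1) (hx : 0 ≤ x) :
    x ^ γ * Real.exp (-x) ≤ 1 := by
  have h : x ^ γ ≤ Real.exp x := by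
    rcases le_or_gt x 1 with h1 | h1
    · calc x ^ γ ≤ 1 ^ γ := Real.rpow_le_rpow hx h1 hγ0
      _ = 1 := Real.one_rpow γ
      _ ≤ Real.exp x := by
        have := Real.add_one_le_exp x; linarith
    · calc x ^ γ ≤ x ^ (1:ℝ) := Real.rpow_le_rpow_of_exponent_le (le_of_lt h1) hγ1
      _ = x := Real.rpow_one x
      _ ≤ Real.exp x := by have := Real.add_one_le_exp x; linarith
  rw [Real.exp_neg, mul_inv_le_iff₀ (Real.exp_pos x), one_mul]
  exact h

private lemma aux_summable_sq_exp {b : ℝ} (hb : 0 < b) :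
    Summable (fun k : ℕ => ((k:ℝ)+1)^2 * Real.exp (-(b*((k:ℝ)+1)^2))) := by
  have hr : ‖Real.exp (-b)‖ < 1 := by
    rw [Real.norm_eq_abs, abs_of_pos (Real.exp_pos _)]
    exact Real.exp_lt_one_iff.mpr (by linarith)
  have hgeo : Summable (fun n : ℕ => (n:ℝ)^2 * (Real.exp (-b))^n) :=
    summable_pow_mul_geometric_of_norm_lt_one 2 hr
  have hshift : Summable (fun k : ℕ => ((k:ℝ)+1)^2 * (Real.exp (-b))^(k+1)) := by
    have := (summable_nat_add_iff 1).mpr hgeo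
    simpa [Nat.cast_add] using this
  apply Summable.of_nonneg_of_le (fun k => by positivity) _ hshift
  intro k
  have hk1 : (1:ℝ) ≤ (k:ℝ)+1 := by have := Nat.cast_nonneg (α := ℝ) k; linarith
  have : Real.exp (-(b*((k:ℝ)+1)^2)) ≤ (Real.exp (-b))^(k+1) := by
    rw [← Real.exp_nat_mul]
    apply Real.exp_le_exp.mpr
    push_cast
    nlinarith [hb, hk1, mul_nonneg (mul_nonneg hb.le (Nat.cast_nonneg (α := ℝ) k)) (Nat.cast_nonneg (α := ℝ) k)]
  have h2 : (0:ℝ) ≤ ((k:ℝ)+1)^2 := by positivity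
  exact mul_le_mul_of_nonneg_left this h2

set_option maxHeartbeats 1000000 in
private lemma aux_tsumA {b : ℝ} (hb : 0 < b) :
    ∑' k:ℕ, ((k:ℝ)+1)^2 * Real.exp (-(b*((k:ℝ)+1)^2)) ≤ 6 * (1 + (Real.sqrt b)⁻¹)^3 := by
  set s := Real.sqrt b with hsdef
  have hs : 0 < s := Real.sqrt_pos.mpr hb
  have hss : s * s = b := Real.mul_self_sqrt hb.le
  set M := ⌈s⁻¹⌉₊ with hMdef
  have hM1 : 1 ≤ M := Nat.one_le_ceil_iff.mpr (by positivity)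
  have hMge : s⁻¹ ≤ (M:ℝ) := Nat.le_ceil _
  have hMle : (M:ℝ) ≤ s⁻¹ + 1 := le_of_lt (Nat.ceil_lt_add_one (by positivity))
  have hsum := aux_summable_sq_exp hb
  set f := fun k : ℕ => ((k:ℝ)+1)^2 * Real.exp (-(b*((k:ℝ)+1)^2)) with hfdef
  have hsplit : ∑ k ∈ Finset.range M, f k + ∑' k, f (k+M) = ∑' k, f k :=
    Summable.sum_add_tsum_nat_add M hsum
  -- part 1
  have hpart1 : ∑ k ∈ Finset.range M, f k ≤ (M:ℝ)^3 := by
    have : ∀ k ∈ Finset.range M, f k ≤ (M:ℝ)^2 := by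
      intro k hk
      have hkM : (k:ℝ)+1 ≤ (M:ℝ) := by
        have := Finset.mem_range.mp hk
        exact_mod_cast Nat.succ_le_of_lt this
      have he1 : Real.exp (-(b*((k:ℝ)+1)^2)) ≤ 1 := Real.exp_le_one_iff.mpr (by nlinarith [hb, sq_nonneg ((k:ℝ)+1)])
      calc f k ≤ ((k:ℝ)+1)^2 * 1 := by
            apply mul_le_mul_of_nonneg_left he1 (by positivity)
      _ = ((k:ℝ)+1)^2 := by ring
      _ ≤ (M:ℝ)^2 := by nlinarith [Nat.cast_nonneg (α := ℝ) k]
    calc ∑ k ∈ Finset.range M, f k ≤ ∑ _k ∈ Finset.range M, (M:ℝ)^2 :=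
          Finset.sum_le_sum this
    _ = (M:ℝ) * (M:ℝ)^2 := by rw [Finset.sum_const, Finset.card_range]; ring
    _ = (M:ℝ)^3 := by ring
  -- part 2
  set r := Real.exp (-(s/2)) with hrdef
  have hr1 : r < 1 := Real.exp_lt_one_iff.mpr (by linarith)
  have hr0 : 0 < r := Real.exp_pos _
  have hpart2 : ∑' k, f (k+M) ≤ (16/7) * s⁻¹^2 * (1 + 2*s⁻¹) := by
    have hterm : ∀ k : ℕ, f (k+M) ≤ ((16/7) * s⁻¹^2) * r^k := by
      intro k
      set m : ℝ := (k:ℝ) + (M:ℝ) + 1 with hmdef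
      have hm1 : (1:ℝ) ≤ m := by
        have : (0:ℝ) ≤ (k:ℝ) := Nat.cast_nonneg k
        have : (0:ℝ) ≤ (M:ℝ) := Nat.cast_nonneg M
        rw [hmdef]
        have hk0 : (0:ℝ) ≤ (k:ℝ) := Nat.cast_nonneg k
        have hM0 : (0:ℝ) ≤ (M:ℝ) := Nat.cast_nonneg M
        linarith
      have hsm : 1 ≤ s * m := by
        have h1 : s * (M:ℝ) ≥ 1 := by
          rw [ge_iff_le, ← inv_le_iff_one_le_mul₀'] <;> [exact hMge; exact hs]
        nlinarith [hs, Nat.cast_nonneg (α := ℝ) k]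
      have hbm : s * m ≤ b * m^2 := by
        have : b * m^2 = (s*m)*(s*m) := by rw [← hss]; ring
        nlinarith
      have hcast : ((k+M:ℕ):ℝ) + 1 = m := by push_cast [hmdef]; ring
      have hfk : f (k+M) = m^2 * Real.exp (-(b*m^2)) := by
        simp only [hfdef, hcast]
      rw [hfk]
      have hes : Real.exp (-(b*m^2)) ≤ Real.exp (-(s*m)) := Real.exp_le_exp.mpr (by linarith)
      have hsplitexp : Real.exp (-(s*m)) = Real.exp (-(s*m/2)) * Real.exp (-(s*m/2)) := by
        rw [← Real.exp_add]; ring_nf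
      have hkey : (s*m/2)^2 * Real.exp (-(s*m/2)) ≤ 4/7 := aux_sq_exp (by positivity)
      have hm2 : m^2 * Real.exp (-(s*m/2)) ≤ (16/7) * s⁻¹^2 := by
        have hs2 : (0:ℝ) < s^2 := by positivity
        have : m^2 = (4 * s⁻¹^2) * (s*m/2)^2 := by
          field_simp; ring
        rw [this]
        calc (4 * s⁻¹^2) * (s*m/2)^2 * Real.exp (-(s*m/2))
            = (4 * s⁻¹^2) * ((s*m/2)^2 * Real.exp (-(s*m/2))) := by ring
        _ ≤ (4 * s⁻¹^2) * (4/7) := by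
            apply mul_le_mul_of_nonneg_left hkey (by positivity)
        _ = (16/7) * s⁻¹^2 := by ring
      have hrm : Real.exp (-(s*m/2)) ≤ r^k := by
        rw [hrdef, ← Real.exp_nat_mul]
        apply Real.exp_le_exp.mpr
        have : (0:ℝ) ≤ (M:ℝ) := Nat.cast_nonneg M
        nlinarith [hs, Nat.cast_nonneg (α := ℝ) k]
      calc m^2 * Real.exp (-(b*m^2)) ≤ m^2 * Real.exp (-(s*m)) := by
            apply mul_le_mul_of_nonneg_left hes (by positivity)
      _ = (m^2 * Real.exp (-(s*m/2))) * Real.exp (-(s*m/2)) := by rw [hsplitexp]; ring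
      _ ≤ ((16/7) * s⁻¹^2) * r^k := by
          apply mul_le_mul hm2 hrm (Real.exp_nonneg _) (by positivity)
    have hsumr : Summable (fun k : ℕ => ((16/7) * s⁻¹^2) * r^k) :=
      (summable_geometric_of_lt_one hr0.le hr1).mul_left _
    calc ∑' k, f (k+M) ≤ ∑' k, ((16/7) * s⁻¹^2) * r^k := by
          apply Summable.tsum_le_tsum hterm ((summable_nat_add_iff M).mpr hsum) hsumr
    _ = ((16/7) * s⁻¹^2) * (1-r)⁻¹ := by
        rw [tsum_mul_left, tsum_geometric_of_lt_one hr0.le hr1]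
    _ ≤ (16/7) * s⁻¹^2 * (1 + 2*s⁻¹) := by
        apply mul_le_mul_of_nonneg_left _ (by positivity)
        have hinv : 1 - r ≥ (s/2) / (1 + s/2) := by
          have h1 : r ≤ (1 + s/2)⁻¹ := by
            rw [hrdef, Real.exp_neg]
            apply inv_anti₀ (by linarith)
            have := Real.add_one_le_exp (s/2); linarith
          have h2 : (0:ℝ) < 1 + s/2 := by linarith
          rw [ge_iff_le, le_sub_comm]
          calc r ≤ (1+s/2)⁻¹ := h1
          _ = 1 - (s/2)/(1+s/2) := by field_simp; ring
        have h2 : (0:ℝ) < 1 + s/2 := by linarith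
        have h3 : (0:ℝ) < (s/2)/(1+s/2) := by positivity
        calc (1-r)⁻¹ ≤ ((s/2)/(1+s/2))⁻¹ := by
              apply inv_anti₀ h3 hinv
        _ = (1+s/2) / (s/2) := by rw [inv_div]
        _ = 1 + 2*s⁻¹ := by
            have hs' : s ≠ 0 := ne_of_gt hs
            field_simp
            ring
  -- combine
  have hM3 : (M:ℝ)^3 ≤ (1+s⁻¹)^3 := by
    apply pow_le_pow_left₀ (Nat.cast_nonneg M)
    linarith
  have hu : (0:ℝ) < s⁻¹ := by positivity
  have : ∑' k, f k ≤ (1+s⁻¹)^3 + (16/7) * s⁻¹^2 * (1 + 2*s⁻¹) := by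
    rw [← hsplit]
    have := hpart1.trans hM3
    linarith
  apply this.trans
  nlinarith [hu, sq_nonneg s⁻¹, pow_pos hu 3]

set_option maxHeartbeats 1000000 in
private lemma aux_W {T t γ : ℝ} (ht0 : 0 < t) (htT : t ≤ T) (hγ0 : 0 ≤ γ) (hγ : γ ≤ 1/2) :
    Summable (fun k : ℕ => 2*Real.pi^2*((k:ℝ)+1)^2 * ((k:ℝ)+1)^(2*γ) *
      Real.exp (-(2*((k:ℝ)+1)^2*Real.pi^2*t))) ∧
    ∑' k:ℕ, 2*Real.pi^2*((k:ℝ)+1)^2 * ((k:ℝ)+1)^(2*γ) *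
      Real.exp (-(2*((k:ℝ)+1)^2*Real.pi^2*t)) ≤ (10*(T+3) * t^(-(3/4+γ/2)))^2 := by
  have hπ : (0:ℝ) < Real.pi := Real.pi_pos
  have hπ1 : (1:ℝ) ≤ Real.pi := by nlinarith [Real.pi_gt_three]
  set b := Real.pi^2 * t with hbdef
  have hb : 0 < b := by positivity
  have hπsq : (1:ℝ) ≤ Real.pi^2 := by nlinarith
  have htb : t ≤ b := le_mul_of_one_le_left ht0.le hπsq
  have hγ1 : γ ≤ 1 := by linarith
  have htγ : (0:ℝ) < t ^ (-γ) := Real.rpow_pos_of_pos ht0 _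
  have hterm : ∀ k : ℕ, 2*Real.pi^2*((k:ℝ)+1)^2 * ((k:ℝ)+1)^(2*γ) *
      Real.exp (-(2*((k:ℝ)+1)^2*Real.pi^2*t))
      ≤ (2*Real.pi^2 * t^(-γ)) * (((k:ℝ)+1)^2 * Real.exp (-(b*((k:ℝ)+1)^2))) := by
    intro k
    set m : ℝ := (k:ℝ)+1 with hmdef
    have hm0 : 0 < m := by positivity
    have hexp2 : Real.exp (-(2*m^2*Real.pi^2*t)) =
        Real.exp (-(b*m^2)) * Real.exp (-(b*m^2)) := by
      rw [← Real.exp_add]; congr 1; rw [hbdef]; ring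
    have hkey : m^(2*γ) * Real.exp (-(b*m^2)) ≤ t^(-γ) := by
      have h1 : m^(2*γ) = (b*m^2)^γ * (b⁻¹)^γ := by
        rw [← Real.mul_rpow (by positivity) (by positivity)]
        have : b*m^2*b⁻¹ = m^2 := by field_simp
        rw [this, ← Real.rpow_natCast m 2, ← Real.rpow_mul hm0.le]
        norm_num [mul_comm]
      have h2 : (b*m^2)^γ * Real.exp (-(b*m^2)) ≤ 1 :=
        aux_rpow_exp hγ0 hγ1 (by positivity)
      have h3 : (b⁻¹)^γ = b^(-γ) := by
        rw [← Real.rpow_neg_one b, ← Real.rpow_mul hb.le]; norm_num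
      have h4 : b^(-γ) ≤ t^(-γ) :=
        Real.rpow_le_rpow_of_nonpos ht0 htb (by linarith)
      calc m^(2*γ) * Real.exp (-(b*m^2))
          = ((b*m^2)^γ * Real.exp (-(b*m^2))) * (b⁻¹)^γ := by rw [h1]; ring
      _ ≤ 1 * (b⁻¹)^γ := by
          apply mul_le_mul_of_nonneg_right h2 (Real.rpow_nonneg (by positivity) _)
      _ = b^(-γ) := by rw [one_mul, h3]
      _ ≤ t^(-γ) := h4
    calc 2*Real.pi^2*m^2 * m^(2*γ) * Real.exp (-(2*m^2*Real.pi^2*t))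
        = (2*Real.pi^2*m^2) * ((m^(2*γ) * Real.exp (-(b*m^2))) * Real.exp (-(b*m^2))) := by
          rw [hexp2]; ring
    _ ≤ (2*Real.pi^2*m^2) * (t^(-γ) * Real.exp (-(b*m^2))) := by
        apply mul_le_mul_of_nonneg_left _ (by positivity)
        apply mul_le_mul_of_nonneg_right hkey (Real.exp_nonneg _)
    _ = (2*Real.pi^2 * t^(-γ)) * (m^2 * Real.exp (-(b*m^2))) := by ring
  have hsumB := aux_summable_sq_exp hb
  have hsumRHS : Summable (fun k : ℕ => (2*Real.pi^2 * t^(-γ)) *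
      (((k:ℝ)+1)^2 * Real.exp (-(b*((k:ℝ)+1)^2)))) := hsumB.mul_left _
  have hnn : ∀ k : ℕ, 0 ≤ 2*Real.pi^2*((k:ℝ)+1)^2 * ((k:ℝ)+1)^(2*γ) *
      Real.exp (-(2*((k:ℝ)+1)^2*Real.pi^2*t)) := by
    intro k; positivity
  have hsumW : Summable (fun k : ℕ => 2*Real.pi^2*((k:ℝ)+1)^2 * ((k:ℝ)+1)^(2*γ) *
      Real.exp (-(2*((k:ℝ)+1)^2*Real.pi^2*t))) :=
    Summable.of_nonneg_of_le hnn hterm hsumRHS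
  refine ⟨hsumW, ?_⟩
  have step1 : ∑' k:ℕ, 2*Real.pi^2*((k:ℝ)+1)^2 * ((k:ℝ)+1)^(2*γ) *
      Real.exp (-(2*((k:ℝ)+1)^2*Real.pi^2*t))
      ≤ (2*Real.pi^2 * t^(-γ)) * ∑' k:ℕ, (((k:ℝ)+1)^2 * Real.exp (-(b*((k:ℝ)+1)^2))) := by
    rw [← tsum_mul_left]
    exact Summable.tsum_le_tsum hterm hsumW hsumRHS
  have step2 : (2*Real.pi^2 * t^(-γ)) * ∑' k:ℕ, (((k:ℝ)+1)^2 * Real.exp (-(b*((k:ℝ)+1)^2)))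
      ≤ (2*Real.pi^2 * t^(-γ)) * (6 * (1 + (Real.sqrt b)⁻¹)^3) := by
    apply mul_le_mul_of_nonneg_left (aux_tsumA hb) (by positivity)
  -- simplify sqrt b
  have hst : 0 < Real.sqrt t := Real.sqrt_pos.mpr ht0
  have hsb : Real.sqrt t ≤ Real.sqrt b := Real.sqrt_le_sqrt htb
  have h6 : (1 + (Real.sqrt b)⁻¹)^3 ≤ (Real.sqrt T + 1)^3 * ((Real.sqrt t)⁻¹)^3 := by
    have h1 : (Real.sqrt b)⁻¹ ≤ (Real.sqrt t)⁻¹ := inv_anti₀ hst hsb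
    have h2 : (1 + (Real.sqrt b)⁻¹) ≤ (Real.sqrt t + 1) * (Real.sqrt t)⁻¹ := by
      have : (Real.sqrt t + 1) * (Real.sqrt t)⁻¹ = 1 + (Real.sqrt t)⁻¹ := by
        field_simp
      rw [this]; linarith
    have h3 : Real.sqrt t ≤ Real.sqrt T := Real.sqrt_le_sqrt htT
    calc (1 + (Real.sqrt b)⁻¹)^3 ≤ ((Real.sqrt t + 1) * (Real.sqrt t)⁻¹)^3 := by
          apply pow_le_pow_left₀ (by positivity) h2
    _ = (Real.sqrt t + 1)^3 * ((Real.sqrt t)⁻¹)^3 := by rw [mul_pow]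
    _ ≤ (Real.sqrt T + 1)^3 * ((Real.sqrt t)⁻¹)^3 := by
        apply mul_le_mul_of_nonneg_right _ (by positivity)
        apply pow_le_pow_left₀ (by positivity) (by linarith)
  -- numeric bound
  have hnum : 12 * Real.pi^2 * (Real.sqrt T + 1)^3 ≤ 100 * (T+3)^2 := by
    set s := Real.sqrt T with hsdef
    have hs0 : 0 ≤ s := Real.sqrt_nonneg T
    have hsT : s^2 = T := Real.sq_sqrt (by linarith : (0:ℝ) ≤ T)
    have hπ315 : Real.pi ≤ 3.15 := by linarith [Real.pi_lt_d2]
    rw [← hsT]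
    have hcube : (0:ℝ) ≤ (s+1)^3 := by positivity
    have hπ2 : Real.pi^2 ≤ 9.9225 := by nlinarith
    nlinarith [mul_le_mul_of_nonneg_right hπ2 hcube, sq_nonneg (s*s - s), sq_nonneg (s-1), hs0, sq_nonneg s]
  -- rpow algebra
  have hrp : t^(-γ) * ((Real.sqrt t)⁻¹)^3 = (t^(-(3/4+γ/2)))^2 := by
    rw [Real.sqrt_eq_rpow, ← Real.rpow_neg_one (t ^ ((1:ℝ)/2)), ← Real.rpow_mul ht0.le,
      ← Real.rpow_natCast (t ^ ((1:ℝ)/2 * (-1))) 3, ← Real.rpow_mul ht0.le,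
      ← Real.rpow_natCast (t ^ (-(3/4+γ/2))) 2, ← Real.rpow_mul ht0.le,
      ← Real.rpow_add ht0]
    norm_num
    ring_nf
  calc ∑' k:ℕ, 2*Real.pi^2*((k:ℝ)+1)^2 * ((k:ℝ)+1)^(2*γ) *
      Real.exp (-(2*((k:ℝ)+1)^2*Real.pi^2*t))
      ≤ (2*Real.pi^2 * t^(-γ)) * (6 * (1 + (Real.sqrt b)⁻¹)^3) := step1.trans step2
  _ ≤ (2*Real.pi^2 * t^(-γ)) * (6 * ((Real.sqrt T + 1)^3 * ((Real.sqrt t)⁻¹)^3)) := by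
      apply mul_le_mul_of_nonneg_left _ (by positivity)
      apply mul_le_mul_of_nonneg_left h6 (by norm_num)
  _ = (12 * Real.pi^2 * (Real.sqrt T + 1)^3) * (t^(-γ) * ((Real.sqrt t)⁻¹)^3) := by ring
  _ ≤ (100 * (T+3)^2) * (t^(-γ) * ((Real.sqrt t)⁻¹)^3) := by
      apply mul_le_mul_of_nonneg_right hnum (by positivity)
  _ = (10*(T+3) * t^(-(3/4+γ/2)))^2 := by
      rw [hrp]; ring

set_option maxHeartbeats 1000000 in
private lemma aux_main {T t γ : ℝ} (a : ℕ → ℝ)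
    (hS : Summable (fun n : ℕ => 2 * ((((n:ℝ)+1)*Real.pi)⁻¹)^2 * (a n)^2))
    (ht0 : 0 < t) (htT : t ≤ T) (hγ0 : 0 ≤ γ) (hγ : γ ≤ 1/2) (M : ℕ) :
    Summable (fun n : ℕ => 2 * Real.exp (-((n:ℝ)+1)^2*Real.pi^2*t) * |a n|) ∧
    ∑' n:ℕ, 2 * Real.exp (-(((n+M:ℕ):ℝ)+1)^2*Real.pi^2*t) * |a (n+M)| ≤
      10*(T+3) * t^(-(3/4+γ/2)) * ((max M 1 : ℕ):ℝ)^(-γ) *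
        Real.sqrt (∑' n : ℕ, 2 * ((((n:ℝ)+1)*Real.pi)⁻¹)^2 * (a n)^2) := by
  have hπ : (0:ℝ) < Real.pi := Real.pi_pos
  set f : ℕ → ℝ := fun n => 2 * Real.exp (-((n:ℝ)+1)^2*Real.pi^2*t) * |a n| with hfdef
  set S : ℝ := ∑' n : ℕ, 2 * ((((n:ℝ)+1)*Real.pi)⁻¹)^2 * (a n)^2 with hSdef
  have hS0 : 0 ≤ S := tsum_nonneg (fun n => by positivity)
  set u : ℕ → ℝ := fun n => Real.sqrt (2 * ((((n:ℝ)+1)*Real.pi)⁻¹)^2 * (a n)^2) with hudef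
  set v : ℕ → ℝ := fun n =>
    Real.sqrt (2 * (((n:ℝ)+1)*Real.pi)^2 * Real.exp (-((n:ℝ)+1)^2*Real.pi^2*t)^2) with hvdef
  have husq : ∀ n, u n ^ 2 = 2 * ((((n:ℝ)+1)*Real.pi)⁻¹)^2 * (a n)^2 := by
    intro n; rw [hudef]; exact Real.sq_sqrt (by positivity)
  have hvsq : ∀ n, v n ^ 2 = 2 * (((n:ℝ)+1)*Real.pi)^2 *
      Real.exp (-((n:ℝ)+1)^2*Real.pi^2*t)^2 := by
    intro n; rw [hvdef]; exact Real.sq_sqrt (by positivity)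
  have huv : ∀ n, f n = u n * v n := by
    intro n
    rw [hudef, hvdef, ← Real.sqrt_mul (by positivity)]
    have hmne : ((n:ℝ)+1)*Real.pi ≠ 0 := by positivity
    have hprod : 2 * ((((n:ℝ)+1)*Real.pi)⁻¹)^2 * (a n)^2 *
        (2 * (((n:ℝ)+1)*Real.pi)^2 * Real.exp (-((n:ℝ)+1)^2*Real.pi^2*t)^2) =
        (2 * Real.exp (-((n:ℝ)+1)^2*Real.pi^2*t) * |a n|)^2 := by
      rw [mul_pow, mul_pow, sq_abs]
      field_simp
    rw [hprod, Real.sqrt_sq (by positivity)]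
  -- summability of u^2 and v^2
  have husum : Summable (fun n => u n ^ 2) := by
    apply hS.congr; intro n; exact (husq n).symm
  have hW := aux_W (T := T) (γ := γ) ht0 htT hγ0 hγ
  have hvWle : ∀ k : ℕ, v k ^ 2 ≤ 2*Real.pi^2*((k:ℝ)+1)^2 * ((k:ℝ)+1)^(2*γ) *
      Real.exp (-(2*((k:ℝ)+1)^2*Real.pi^2*t)) := by
    intro k
    rw [hvsq k]
    have hE2 : Real.exp (-((k:ℝ)+1)^2*Real.pi^2*t)^2 =
        Real.exp (-(2*((k:ℝ)+1)^2*Real.pi^2*t)) := by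
      rw [sq, ← Real.exp_add]; ring_nf
    rw [hE2]
    have h1 : (1:ℝ) ≤ ((k:ℝ)+1)^(2*γ) := by
      have : ((k:ℝ)+1)^(0:ℝ) ≤ ((k:ℝ)+1)^(2*γ) := by
        apply Real.rpow_le_rpow_of_exponent_le
        · have := Nat.cast_nonneg (α := ℝ) k; linarith
        · positivity
      rwa [Real.rpow_zero] at this
    have hnn : (0:ℝ) ≤ 2*Real.pi^2*((k:ℝ)+1)^2 *
        Real.exp (-(2*((k:ℝ)+1)^2*Real.pi^2*t)) := by positivity
    calc 2 * (((k:ℝ)+1)*Real.pi)^2 * Real.exp (-(2*((k:ℝ)+1)^2*Real.pi^2*t))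
        = (2*Real.pi^2*((k:ℝ)+1)^2 * Real.exp (-(2*((k:ℝ)+1)^2*Real.pi^2*t))) * 1 := by ring
    _ ≤ (2*Real.pi^2*((k:ℝ)+1)^2 * Real.exp (-(2*((k:ℝ)+1)^2*Real.pi^2*t))) * ((k:ℝ)+1)^(2*γ) :=
        mul_le_mul_of_nonneg_left h1 hnn
    _ = 2*Real.pi^2*((k:ℝ)+1)^2 * ((k:ℝ)+1)^(2*γ) *
        Real.exp (-(2*((k:ℝ)+1)^2*Real.pi^2*t)) := by ring
  have hvsum : Summable (fun n => v n ^ 2) :=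
    Summable.of_nonneg_of_le (fun n => sq_nonneg _) hvWle hW.1
  -- summability of f
  have hfnn : ∀ n, 0 ≤ f n := fun n => by rw [hfdef]; positivity
  have hfsum : Summable f := by
    apply Summable.of_nonneg_of_le hfnn (fun n => ?_) ((husum.add hvsum).div_const 2)
    rw [huv n]
    have := sq_nonneg (u n - v n)
    nlinarith [sq_nonneg (u n - v n)]
  have hfshift : Summable (fun n => f (n+M)) := (summable_nat_add_iff M).mpr hfsum
  have husqshift : Summable (fun n => u (n+M) ^ 2) := (summable_nat_add_iff M).mpr husum
  have hvsqshift : Summable (fun n => v (n+M) ^ 2) := (summable_nat_add_iff M).mpr hvsum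
  -- tail sums bounded by full sums
  have htail_u : ∑' n, u (n+M) ^ 2 ≤ S := by
    have h := Summable.sum_add_tsum_nat_add M husum
    have hhead : 0 ≤ ∑ i ∈ Finset.range M, u i ^ 2 :=
      Finset.sum_nonneg (fun i _ => sq_nonneg _)
    have hSeq : ∑' n, u n ^ 2 = S := by
      rw [hSdef]; exact tsum_congr husq
    linarith [h, hSeq ▸ h]
  set V : ℝ := ∑' n, v (n+M) ^ 2 with hVdef
  have hV0 : 0 ≤ V := tsum_nonneg (fun n => sq_nonneg _)
  -- CS step
  have hCS : ∑' n, f (n+M) ≤ Real.sqrt S * Real.sqrt V := by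
    apply Summable.tsum_le_of_sum_le hfshift
    intro s
    have h1 : ∑ i ∈ s, f (i+M) = ∑ i ∈ s, u (i+M) * v (i+M) := by
      apply Finset.sum_congr rfl; intro i _; exact huv (i+M)
    rw [h1]
    calc ∑ i ∈ s, u (i+M) * v (i+M)
        ≤ Real.sqrt (∑ i ∈ s, u (i+M)^2) * Real.sqrt (∑ i ∈ s, v (i+M)^2) :=
          Real.sum_mul_le_sqrt_mul_sqrt s _ _
    _ ≤ Real.sqrt S * Real.sqrt V := by
        apply mul_le_mul
        · apply Real.sqrt_le_sqrt
          exact (Summable.sum_le_tsum s (fun i _ => sq_nonneg _) husqshift).trans htail_u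
        · apply Real.sqrt_le_sqrt
          exact Summable.sum_le_tsum s (fun i _ => sq_nonneg _) hvsqshift
        · exact Real.sqrt_nonneg _
        · exact Real.sqrt_nonneg _
  -- bound on V
  set K : ℝ := ((max M 1 : ℕ):ℝ) with hKdef
  have hK1 : (1:ℝ) ≤ K := by
    rw [hKdef]; exact_mod_cast le_max_right M 1
  have hK0 : (0:ℝ) < K := lt_of_lt_of_le one_pos hK1
  have hVK : V ≤ K^(-(2*γ)) * (10*(T+3) * t^(-(3/4+γ/2)))^2 := by
    have hWshift : Summable (fun n : ℕ => 2*Real.pi^2*(((n+M:ℕ):ℝ)+1)^2 *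
        (((n+M:ℕ):ℝ)+1)^(2*γ) * Real.exp (-(2*(((n+M:ℕ):ℝ)+1)^2*Real.pi^2*t))) :=
      (summable_nat_add_iff M).mpr hW.1
    have key : ∀ m : ℝ, K ≤ m →
        2*Real.pi^2*m^2 * Real.exp (-(2*m^2*Real.pi^2*t))
          ≤ K^(-(2*γ)) * (2*Real.pi^2*m^2 * m^(2*γ) * Real.exp (-(2*m^2*Real.pi^2*t))) := by
      intro m hKm
      have hm0 : 0 < m := lt_of_lt_of_le hK0 hKm
      have hmono : m^(-(2*γ)) ≤ K^(-(2*γ)) :=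
        Real.rpow_le_rpow_of_nonpos hK0 hKm (by linarith)
      have hx : 0 < m^(2*γ) := Real.rpow_pos_of_pos hm0 _
      have hid : m^(-(2*γ)) * m^(2*γ) = 1 := by rw [← Real.rpow_add hm0]; simp
      have h1 : 1 ≤ K^(-(2*γ)) * m^(2*γ) := by
        calc (1:ℝ) = m^(-(2*γ)) * m^(2*γ) := hid.symm
        _ ≤ K^(-(2*γ)) * m^(2*γ) := mul_le_mul_of_nonneg_right hmono hx.le
      have hX : 0 ≤ 2*Real.pi^2*m^2 * Real.exp (-(2*m^2*Real.pi^2*t)) := by positivity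
      calc 2*Real.pi^2*m^2 * Real.exp (-(2*m^2*Real.pi^2*t))
          = (2*Real.pi^2*m^2 * Real.exp (-(2*m^2*Real.pi^2*t))) * 1 := by ring
      _ ≤ (2*Real.pi^2*m^2 * Real.exp (-(2*m^2*Real.pi^2*t))) * (K^(-(2*γ)) * m^(2*γ)) :=
          mul_le_mul_of_nonneg_left h1 hX
      _ = K^(-(2*γ)) * (2*Real.pi^2*m^2 * m^(2*γ) * Real.exp (-(2*m^2*Real.pi^2*t))) := by ring
    have hterm : ∀ n : ℕ, v (n+M) ^ 2 ≤ K^(-(2*γ)) *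
        (2*Real.pi^2*(((n+M:ℕ):ℝ)+1)^2 * (((n+M:ℕ):ℝ)+1)^(2*γ) *
          Real.exp (-(2*(((n+M:ℕ):ℝ)+1)^2*Real.pi^2*t))) := by
      intro n
      have hKm : K ≤ ((n+M:ℕ):ℝ)+1 := by
        rw [hKdef]
        have h1 : (max M 1 : ℕ) ≤ (n+M)+1 := by omega
        have h2 := (Nat.cast_le (α := ℝ)).mpr h1
        push_cast at h2 ⊢
        linarith
      have hE2 : Real.exp (-(((n+M:ℕ):ℝ)+1)^2*Real.pi^2*t)^2 =
          Real.exp (-(2*(((n+M:ℕ):ℝ)+1)^2*Real.pi^2*t)) := by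
        rw [sq, ← Real.exp_add]; ring_nf
      have hveq : v (n+M) ^ 2 = 2*Real.pi^2*(((n+M:ℕ):ℝ)+1)^2 *
          Real.exp (-(2*(((n+M:ℕ):ℝ)+1)^2*Real.pi^2*t)) := by
        rw [hvsq (n+M), hE2]; ring
      rw [hveq]
      exact key _ hKm
    have hKp : (0:ℝ) ≤ K^(-(2*γ)) := Real.rpow_nonneg hK0.le _
    calc V ≤ ∑' n, K^(-(2*γ)) *
        (2*Real.pi^2*(((n+M:ℕ):ℝ)+1)^2 * (((n+M:ℕ):ℝ)+1)^(2*γ) *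
          Real.exp (-(2*(((n+M:ℕ):ℝ)+1)^2*Real.pi^2*t))) := by
          apply Summable.tsum_le_tsum hterm hvsqshift (hWshift.mul_left _)
    _ = K^(-(2*γ)) * ∑' n, (2*Real.pi^2*(((n+M:ℕ):ℝ)+1)^2 * (((n+M:ℕ):ℝ)+1)^(2*γ) *
          Real.exp (-(2*(((n+M:ℕ):ℝ)+1)^2*Real.pi^2*t))) := tsum_mul_left
    _ ≤ K^(-(2*γ)) * (10*(T+3) * t^(-(3/4+γ/2)))^2 := by
        apply mul_le_mul_of_nonneg_left _ hKp
        have h := Summable.sum_add_tsum_nat_add M hW.1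
        have hhead : 0 ≤ ∑ i ∈ Finset.range M, (2*Real.pi^2*((i:ℝ)+1)^2 * ((i:ℝ)+1)^(2*γ) *
            Real.exp (-(2*((i:ℝ)+1)^2*Real.pi^2*t))) :=
          Finset.sum_nonneg (fun i _ => by positivity)
        have := hW.2
        linarith
  -- conclude
  have hB0 : (0:ℝ) ≤ 10*(T+3) * t^(-(3/4+γ/2)) := by
    have hT0 : 0 < T := lt_of_lt_of_le ht0 htT
    positivity
  have hsqrtV : Real.sqrt V ≤ K^(-γ) * (10*(T+3) * t^(-(3/4+γ/2))) := by
    have h1 : K^(-(2*γ)) = (K^(-γ))^2 := by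
      rw [← Real.rpow_natCast (K^(-γ)) 2, ← Real.rpow_mul hK0.le]
      norm_num; ring_nf
    have h2 : Real.sqrt V ≤ Real.sqrt ((K^(-γ))^2 * (10*(T+3) * t^(-(3/4+γ/2)))^2) := by
      apply Real.sqrt_le_sqrt; rw [← h1]; exact hVK
    have h3 : (K^(-γ))^2 * (10*(T+3) * t^(-(3/4+γ/2)))^2
        = (K^(-γ) * (10*(T+3) * t^(-(3/4+γ/2))))^2 := by ring
    rw [h3] at h2
    rw [Real.sqrt_sq (by positivity)] at h2
    exact h2
  refine ⟨hfsum, ?_⟩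
  calc ∑' n, f (n+M) ≤ Real.sqrt S * Real.sqrt V := hCS
  _ ≤ Real.sqrt S * (K^(-γ) * (10*(T+3) * t^(-(3/4+γ/2)))) := by
      apply mul_le_mul_of_nonneg_left hsqrtV (Real.sqrt_nonneg _)
  _ = 10*(T+3) * t^(-(3/4+γ/2)) * K^(-γ) * Real.sqrt S := by ring


private lemma aux_int_cos (c : ℝ) :
    ∫ x in (0:ℝ)..1, Real.cos (c*x) = if c = 0 then 1 else Real.sin c / c := by
  rcases eq_or_ne c 0 with h | h
  · simp [h]
  · rw [if_neg h]
    rw [intervalIntegral.integral_comp_mul_left (fun x => Real.cos x) h]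
    simp [integral_cos, h, div_eq_inv_mul]

set_option maxHeartbeats 1000000 in
private lemma aux_ortho (n j : ℕ) :
    ∫ x in (0:ℝ)..1, Real.sin (((n:ℝ)+1)*Real.pi*x) * Real.sin (((j:ℝ)+1)*Real.pi*x)
      = if n = j then 1/2 else 0 := by
  have hπ : Real.pi ≠ 0 := Real.pi_ne_zero
  set A : ℝ := ((n:ℝ)+1)*Real.pi with hA
  set B : ℝ := ((j:ℝ)+1)*Real.pi with hB
  have hid : ∀ x : ℝ, Real.sin (A*x) * Real.sin (B*x)
      = (Real.cos ((A-B)*x) - Real.cos ((A+B)*x))/2 := by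
    intro x
    rw [Real.cos_sub_cos]
    have h1 : ((A-B)*x + (A+B)*x)/2 = A*x := by ring
    have h2 : ((A-B)*x - (A+B)*x)/2 = -(B*x) := by ring
    rw [h1, h2, Real.sin_neg]
    ring
  have hInt1 : IntervalIntegrable (fun x => Real.cos ((A-B)*x)) volume 0 1 :=
    (Real.continuous_cos.comp (continuous_const.mul continuous_id)).intervalIntegrable 0 1
  have hInt2 : IntervalIntegrable (fun x => Real.cos ((A+B)*x)) volume 0 1 :=
    (Real.continuous_cos.comp (continuous_const.mul continuous_id)).intervalIntegrable 0 1
  calc ∫ x in (0:ℝ)..1, Real.sin (A*x) * Real.sin (B*x)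
      = ∫ x in (0:ℝ)..1, (Real.cos ((A-B)*x) - Real.cos ((A+B)*x))/2 := by
        apply intervalIntegral.integral_congr
        intro x _
        exact hid x
  _ = ((∫ x in (0:ℝ)..1, Real.cos ((A-B)*x)) - ∫ x in (0:ℝ)..1, Real.cos ((A+B)*x))/2 := by
       rw [intervalIntegral.integral_div, intervalIntegral.integral_sub hInt1 hInt2]
  _ = if n = j then 1/2 else 0 := by
      rw [aux_int_cos, aux_int_cos]
      have hABne : A + B ≠ 0 := by
        rw [hA, hB]
        have h1 : (0:ℝ) < ((n:ℝ)+1)*Real.pi + ((j:ℝ)+1)*Real.pi := by positivity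
        linarith
      have hsinAB : Real.sin (A+B) = 0 := by
        have : A + B = ((n+j+2:ℕ):ℝ) * Real.pi := by rw [hA, hB]; push_cast; ring
        rw [this]
        exact Real.sin_nat_mul_pi _
      rcases eq_or_ne n j with hnj | hnj
      · subst hnj
        have hABz : A - B = 0 := by rw [hA, hB]; ring
        rw [if_pos hABz, if_neg hABne, if_pos rfl, hsinAB]
        norm_num
      · have hABz : A - B ≠ 0 := by
          rw [hA, hB]
          have hd : ((n:ℝ)+1)*Real.pi - ((j:ℝ)+1)*Real.pi = ((n:ℝ)-(j:ℝ))*Real.pi := by ring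
          rw [hd]
          intro hcon
          rcases mul_eq_zero.mp hcon with h | h
          · apply hnj
            have h2 : (n:ℝ) = (j:ℝ) := by linarith
            exact_mod_cast h2
          · exact hπ h
        have hsinABm : Real.sin (A-B) = 0 := by
          have h := Real.sin_int_mul_pi ((n:ℤ) - (j:ℤ))
          push_cast at h
          have hz : A - B = ((n:ℝ) - (j:ℝ)) * Real.pi := by rw [hA, hB]; ring
          rw [hz]
          exact h
        rw [if_neg hABz, if_neg hABne, if_neg hnj, hsinABm, hsinAB]
        norm_num

private lemma aux_coeff (w : ℝ → ℝ) (hw : MemLp w 2 (volume.restrict (Set.Ioo (0:ℝ) 1))) :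
    ∃ C : ℝ, 0 ≤ C ∧ ∀ n : ℕ, |sinCoeff w n| ≤ C := by
  haveI : Fact ((volume : Measure ℝ) (Set.Ioo (0:ℝ) 1) < ⊤) :=
    ⟨by rw [Real.volume_Ioo]; norm_num⟩
  have hInt : Integrable w (volume.restrict (Set.Ioo (0:ℝ) 1)) :=
    hw.integrable (by norm_num)
  have hIntIoc : Integrable w (volume.restrict (Set.Ioc (0:ℝ) 1)) := by
    rwa [← Measure.restrict_congr_set Ioo_ae_eq_Ioc]
  have hII : IntervalIntegrable w volume 0 1 := by
    rw [intervalIntegrable_iff, Set.uIoc_of_le (by norm_num : (0:ℝ) ≤ 1)]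
    exact hIntIoc
  have hIIabs : IntervalIntegrable (fun x => |w x|) volume 0 1 := hII.abs
  refine ⟨∫ x in (0:ℝ)..1, |w x|, ?_, ?_⟩
  · apply intervalIntegral.integral_nonneg (by norm_num)
    intro x _; exact abs_nonneg _
  intro n
  have hIIn : IntervalIntegrable (fun x => w x * Real.sin (((n:ℝ)+1)*Real.pi*x)) volume 0 1 := by
    rw [intervalIntegrable_iff, Set.uIoc_of_le (by norm_num : (0:ℝ) ≤ 1)]
    have hb : Integrable (fun x => Real.sin (((n:ℝ)+1)*Real.pi*x) * w x)
        (volume.restrict (Set.Ioc (0:ℝ) 1)) := by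
      apply hIntIoc.bdd_mul (c := 1)
      · exact (Real.continuous_sin.comp (continuous_const.mul continuous_id)).aestronglyMeasurable
      · exact Filter.Eventually.of_forall (fun x => by rw [Real.norm_eq_abs]; exact Real.abs_sin_le_one _)
    have : (fun x => w x * Real.sin (((n:ℝ)+1)*Real.pi*x))
        = (fun x => Real.sin (((n:ℝ)+1)*Real.pi*x) * w x) := by
      funext x; ring
    rw [this]
    exact hb
  have h1 : |sinCoeff w n| ≤ ∫ x in (0:ℝ)..1, |w x * Real.sin (((n:ℝ)+1)*Real.pi*x)| := by
    rw [sinCoeff]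
    have := intervalIntegral.norm_integral_le_integral_norm
      (f := fun x => w x * Real.sin (((n:ℝ)+1)*Real.pi*x)) (a := (0:ℝ)) (b := 1)
      (μ := volume) (by norm_num)
    simpa [Real.norm_eq_abs, abs_mul] using this
  apply h1.trans
  apply intervalIntegral.integral_mono_on (by norm_num) hIIn.abs hIIabs
  intro x _
  rw [abs_mul]
  calc |w x| * |Real.sin (((n:ℝ)+1)*Real.pi*x)| ≤ |w x| * 1 :=
    mul_le_mul_of_nonneg_left (Real.abs_sin_le_one _) (abs_nonneg _)
  _ = |w x| := by ring

private lemma aux_Hm1_summable (w : ℝ → ℝ)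
    (hw : MemLp w 2 (volume.restrict (Set.Ioo (0:ℝ) 1))) :
    Summable (fun n : ℕ => 2 * ((((n:ℝ)+1)*Real.pi)⁻¹)^2 * (sinCoeff w n)^2) := by
  obtain ⟨C, hC0, hC⟩ := aux_coeff w hw
  have hπ : (0:ℝ) < Real.pi := Real.pi_pos
  have hbase : Summable (fun n : ℕ => 1/((n:ℝ)+1)^2) := by
    have h := (summable_nat_add_iff (f := fun n : ℕ => 1/(n:ℝ)^2) 1).mpr
      (summable_one_div_nat_pow.mpr (by norm_num))
    apply h.congr
    intro n
    push_cast
    ring_nf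
  apply Summable.of_nonneg_of_le (fun n => by positivity) _ (hbase.mul_left (2*C^2/Real.pi^2))
  intro n
  have h1 : (sinCoeff w n)^2 ≤ C^2 := by
    have := hC n
    nlinarith [abs_nonneg (sinCoeff w n), sq_abs (sinCoeff w n)]
  have h2 : ((((n:ℝ)+1)*Real.pi)⁻¹)^2 = 1/((n:ℝ)+1)^2 * (1/Real.pi^2) := by
    rw [mul_inv]
    field_simp
  rw [h2]
  have hpos : 0 ≤ 1/((n:ℝ)+1)^2 * (1/Real.pi^2) := by positivity
  calc 2 * (1/((n:ℝ)+1)^2 * (1/Real.pi^2)) * (sinCoeff w n)^2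
      ≤ 2 * (1/((n:ℝ)+1)^2 * (1/Real.pi^2)) * C^2 := by
        apply mul_le_mul_of_nonneg_left h1 (by positivity)
  _ = 2*C^2/Real.pi^2 * (1/((n:ℝ)+1)^2) := by ring


set_option maxHeartbeats 1000000 in
private lemma aux_swap (c : ℕ → ℝ) (hc : Summable (fun n => |c n|)) (j : ℕ) :
    sinCoeff (fun x => ∑' n : ℕ, c n * Real.sin (((n:ℝ)+1)*Real.pi*x)) j = c j / 2 := by
  have h01 : (0:ℝ) ≤ 1 := by norm_num
  set F : ℕ → ℝ → ℝ := fun n x => c n * Real.sin (((n:ℝ)+1)*Real.pi*x) *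
    Real.sin (((j:ℝ)+1)*Real.pi*x) with hF
  have hsin : ∀ m : ℕ, Continuous (fun x : ℝ => Real.sin (((m:ℝ)+1)*Real.pi*x)) := by
    intro m
    exact Real.continuous_sin.comp ((continuous_const.mul continuous_id))
  have hFcont : ∀ n, Continuous (F n) := by
    intro n
    exact ((continuous_const.mul (hsin n)).mul (hsin j))
  have hFint : ∀ n, Integrable (F n) (volume.restrict (Set.Ioc (0:ℝ) 1)) := by
    intro n
    exact (hFcont n).integrableOn_Ioc
  have hFabs : ∀ n x, ‖F n x‖ ≤ |c n| := by
    intro n x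
    rw [hF, Real.norm_eq_abs, abs_mul, abs_mul]
    calc |c n| * |Real.sin (((n:ℝ)+1)*Real.pi*x)| * |Real.sin (((j:ℝ)+1)*Real.pi*x)|
        ≤ |c n| * 1 * 1 := by
          apply mul_le_mul
          · apply mul_le_mul_of_nonneg_left (Real.abs_sin_le_one _) (abs_nonneg _)
          · exact Real.abs_sin_le_one _
          · exact abs_nonneg _
          · positivity
    _ = |c n| := by ring
  have hFnorm : ∀ n, ∫ x in Set.Ioc (0:ℝ) 1, ‖F n x‖ ≤ |c n| := by
    intro n
    calc ∫ x in Set.Ioc (0:ℝ) 1, ‖F n x‖ ≤ ∫ _x in Set.Ioc (0:ℝ) 1, |c n| := by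
          apply integral_mono_of_nonneg
          · exact Filter.Eventually.of_forall (fun x => norm_nonneg _)
          · exact integrable_const _
          · exact Filter.Eventually.of_forall (fun x => hFabs n x)
    _ = |c n| := by
        rw [MeasureTheory.integral_const]
        simp [Real.volume_Ioc]
  have hFsum : Summable (fun n => ∫ x in Set.Ioc (0:ℝ) 1, ‖F n x‖) := by
    apply Summable.of_nonneg_of_le _ hFnorm hc
    intro n
    exact integral_nonneg (fun x => norm_nonneg _)
  have hswap := integral_tsum_of_summable_integral_norm hFint hFsum
  have hcoeff : sinCoeff (fun x => ∑' n : ℕ, c n * Real.sin (((n:ℝ)+1)*Real.pi*x)) j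
      = ∑' n, ∫ x in Set.Ioc (0:ℝ) 1, F n x := by
    rw [sinCoeff, intervalIntegral.integral_of_le h01]
    rw [show (∫ x in Set.Ioc (0:ℝ) 1, (∑' n : ℕ, c n * Real.sin (((n:ℝ)+1)*Real.pi*x)) *
        Real.sin (((j:ℝ)+1)*Real.pi*x)) = ∫ x in Set.Ioc (0:ℝ) 1, ∑' n : ℕ, F n x from by
      apply setIntegral_congr_fun measurableSet_Ioc
      intro x _
      show (∑' n : ℕ, c n * Real.sin (((n:ℝ)+1)*Real.pi*x)) * Real.sin (((j:ℝ)+1)*Real.pi*x)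
        = ∑' n : ℕ, c n * Real.sin (((n:ℝ)+1)*Real.pi*x) * Real.sin (((j:ℝ)+1)*Real.pi*x)
      exact (tsum_mul_right).symm]
    rw [← hswap]
  rw [hcoeff]
  have hval : ∀ n, ∫ x in Set.Ioc (0:ℝ) 1, F n x = c n * (if n = j then 1/2 else 0) := by
    intro n
    rw [← intervalIntegral.integral_of_le h01]
    have : ∀ x : ℝ, F n x = c n * (Real.sin (((n:ℝ)+1)*Real.pi*x) *
        Real.sin (((j:ℝ)+1)*Real.pi*x)) := by
      intro x; rw [hF]; ring
    calc ∫ x in (0:ℝ)..1, F n x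
        = ∫ x in (0:ℝ)..1, c n * (Real.sin (((n:ℝ)+1)*Real.pi*x) *
            Real.sin (((j:ℝ)+1)*Real.pi*x)) := by
          apply intervalIntegral.integral_congr
          intro x _; exact this x
    _ = c n * ∫ x in (0:ℝ)..1, Real.sin (((n:ℝ)+1)*Real.pi*x) *
            Real.sin (((j:ℝ)+1)*Real.pi*x) := intervalIntegral.integral_const_mul _ _
    _ = c n * (if n = j then 1/2 else 0) := by rw [aux_ortho]
  calc ∑' n, ∫ x in Set.Ioc (0:ℝ) 1, F n x
      = ∑' n, c n * (if n = j then 1/2 else 0) := tsum_congr hval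
  _ = c j * (if j = j then (1:ℝ)/2 else 0) := by
      apply tsum_eq_single
      intro b hb
      rw [if_neg hb, mul_zero]
  _ = c j / 2 := by rw [if_pos rfl]; ring


set_option maxHeartbeats 1000000 in
/-- **Lemma `BurgerSG`.** For every `t ∈ (0,T]` and `w ∈ L²((0,1),ℝ)`
the series defining `S_t w` converges and gives a continuous function on `[0,1]`, and
for every `γ ∈ [0,1/2)` and `N ∈ ℕ`:
`‖S_t w‖_∞ ≤ 10 (T+3) t^{−3/4} ‖w‖_{H^{−1}}` and
`‖S_t w − P_N(S_t w)‖_∞ ≤ 10 (T+3) t^{−(3/4+γ/2)} N^{−γ} ‖w‖_{H^{−1}}`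
(sup-norm bounds stated pointwise on `[0,1]`). -/
theorem stmt_7 (T : ℝ) (hT : 0 < T) (w : ℝ → ℝ)
    (hw : MemLp w 2 (volume.restrict (Set.Ioo (0:ℝ) 1))) :
    ∀ t ∈ Set.Ioc (0:ℝ) T,
      (∀ x ∈ Set.Icc (0:ℝ) 1,
        Summable fun n : ℕ => 2 * Real.exp (-((n:ℝ) + 1) ^ 2 * Real.pi ^ 2 * t) *
          sinCoeff w n * Real.sin (((n:ℝ) + 1) * Real.pi * x)) ∧
      ContinuousOn (heat1 t w) (Set.Icc (0:ℝ) 1) ∧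
      (∀ x ∈ Set.Icc (0:ℝ) 1,
        |heat1 t w x| ≤ 10 * (T + 3) * t ^ (-(3/4 : ℝ)) * Hm1norm w) ∧
      (∀ γ : ℝ, 0 ≤ γ → γ < 1/2 → ∀ N : ℕ, 1 ≤ N → ∀ x ∈ Set.Icc (0:ℝ) 1,
        |heat1 t w x - P1 N (heat1 t w) x| ≤
          10 * (T + 3) * t ^ (-(3/4 + γ/2)) * (N:ℝ) ^ (-γ) * Hm1norm w) := by

  intro t ht
  obtain ⟨ht0, htT⟩ := ht
  have hT0 : 0 < T := hT
  have hS := aux_Hm1_summable w hw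
  set c : ℕ → ℝ := fun n => 2 * Real.exp (-((n:ℝ)+1)^2*Real.pi^2*t) * sinCoeff w n with hcdef
  set f : ℕ → ℝ := fun n => 2 * Real.exp (-((n:ℝ)+1)^2*Real.pi^2*t) * |sinCoeff w n| with hfdef
  have habs : ∀ n, |c n| = f n := by
    intro n
    rw [hcdef, hfdef, abs_mul, abs_mul]
    simp [abs_of_pos (Real.exp_pos _)]
  have hmain0 := aux_main (T := T) (t := t) (γ := 0) (sinCoeff w) hS ht0 htT le_rfl (by norm_num) 0
  have hfsum : Summable f := hmain0.1
  have hcabs_sum : Summable (fun n => |c n|) := hfsum.congr (fun n => (habs n).symm)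
  have htermabs : ∀ (x : ℝ) (n : ℕ),
      ‖c n * Real.sin (((n:ℝ)+1)*Real.pi*x)‖ ≤ |c n| := by
    intro x n
    rw [Real.norm_eq_abs, abs_mul]
    calc |c n| * |Real.sin (((n:ℝ)+1)*Real.pi*x)| ≤ |c n| * 1 :=
      mul_le_mul_of_nonneg_left (Real.abs_sin_le_one _) (abs_nonneg _)
    _ = |c n| := by ring
  have hsummable : ∀ x : ℝ,
      Summable (fun n : ℕ => c n * Real.sin (((n:ℝ)+1)*Real.pi*x)) := by
    intro x
    apply Summable.of_abs
    apply Summable.of_nonneg_of_le (fun n => abs_nonneg _) _ hcabs_sum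
    intro n
    exact htermabs x n
  have hheq : heat1 t w = fun x => ∑' n : ℕ, c n * Real.sin (((n:ℝ)+1)*Real.pi*x) := rfl
  have hcont : Continuous (heat1 t w) := by
    rw [hheq]
    apply continuous_tsum (u := fun n => |c n|)
    · intro n
      exact continuous_const.mul
        (Real.continuous_sin.comp (continuous_const.mul continuous_id))
    · exact hcabs_sum
    · intro n x
      exact htermabs x n
  refine ⟨fun x _ => hsummable x, hcont.continuousOn, ?_, ?_⟩
  · -- first bound
    intro x _
    have hnormsum : Summable (fun n : ℕ => ‖c n * Real.sin (((n:ℝ)+1)*Real.pi*x)‖) := by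
      apply Summable.of_nonneg_of_le (fun n => norm_nonneg _) (fun n => htermabs x n) hcabs_sum
    have h1 : |heat1 t w x| ≤ ∑' n : ℕ, ‖c n * Real.sin (((n:ℝ)+1)*Real.pi*x)‖ := by
      rw [hheq, ← Real.norm_eq_abs]
      exact norm_tsum_le_tsum_norm hnormsum
    have h2 : ∑' n : ℕ, ‖c n * Real.sin (((n:ℝ)+1)*Real.pi*x)‖ ≤ ∑' n, f n := by
      apply Summable.tsum_le_tsum _ hnormsum hfsum
      intro n
      exact (htermabs x n).trans (le_of_eq (habs n))
    have h3 : ∑' n, f n ≤ 10*(T+3) * t^(-(3/4:ℝ)) * Hm1norm w := by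
      have hb := hmain0.2
      have heq : ∑' (n:ℕ), 2 * Real.exp (-(((n+0:ℕ):ℝ)+1)^2*Real.pi^2*t) * |sinCoeff w (n+0)|
          = ∑' n, f n := by
        apply tsum_congr
        intro n
        rw [hfdef]
        norm_num
      rw [heq] at hb
      have hrw : 10*(T+3) * t^(-(3/4+(0:ℝ)/2)) * ((max 0 1 : ℕ):ℝ)^(-(0:ℝ)) *
          Real.sqrt (∑' n : ℕ, 2 * ((((n:ℝ)+1)*Real.pi)⁻¹)^2 * (sinCoeff w n)^2)
          = 10*(T+3) * t^(-(3/4:ℝ)) * Hm1norm w := by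
        rw [Hm1norm]
        norm_num
      rw [hrw] at hb
      exact hb
    calc |heat1 t w x| ≤ ∑' n : ℕ, ‖c n * Real.sin (((n:ℝ)+1)*Real.pi*x)‖ := h1
    _ ≤ ∑' n, f n := h2
    _ ≤ 10*(T+3) * t^(-(3/4:ℝ)) * Hm1norm w := h3
  · -- second bound
    intro γ hγ0 hγlt N hN1 x _
    have hγ : γ ≤ 1/2 := le_of_lt hγlt
    have hmain := aux_main (T := T) (t := t) (γ := γ) (sinCoeff w) hS ht0 htT hγ0 hγ N
    have hswap : ∀ j : ℕ, sinCoeff (heat1 t w) j = c j / 2 := by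
      intro j
      rw [hheq]
      exact aux_swap c hcabs_sum j
    have hP1 : P1 N (heat1 t w) x
        = ∑ n ∈ Finset.range N, c n * Real.sin (((n:ℝ)+1)*Real.pi*x) := by
      rw [P1]
      apply Finset.sum_congr rfl
      intro n _
      rw [hswap n]
      ring
    have hsplit := Summable.sum_add_tsum_nat_add (f := fun n : ℕ => c n * Real.sin (((n:ℝ)+1)*Real.pi*x))
      N (hsummable x)
    have hdiff : heat1 t w x - P1 N (heat1 t w) x
        = ∑' n : ℕ, c (n+N) * Real.sin ((((n+N:ℕ):ℝ)+1)*Real.pi*x) := by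
      rw [hP1, hheq]
      simp only []
      linarith [hsplit]
    have hshiftnorm : Summable (fun n : ℕ =>
        ‖c (n+N) * Real.sin ((((n+N:ℕ):ℝ)+1)*Real.pi*x)‖) := by
      apply Summable.of_nonneg_of_le (fun n => norm_nonneg _) _
        ((summable_nat_add_iff N).mpr hfsum)
      intro n
      exact (htermabs x (n+N)).trans (le_of_eq (habs (n+N)))
    have h1 : |heat1 t w x - P1 N (heat1 t w) x|
        ≤ ∑' n : ℕ, ‖c (n+N) * Real.sin ((((n+N:ℕ):ℝ)+1)*Real.pi*x)‖ := by
      rw [hdiff, ← Real.norm_eq_abs]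
      exact norm_tsum_le_tsum_norm hshiftnorm
    have h2 : ∑' n : ℕ, ‖c (n+N) * Real.sin ((((n+N:ℕ):ℝ)+1)*Real.pi*x)‖
        ≤ ∑' n : ℕ, f (n+N) := by
      apply Summable.tsum_le_tsum _ hshiftnorm ((summable_nat_add_iff N).mpr hfsum)
      intro n
      exact (htermabs x (n+N)).trans (le_of_eq (habs (n+N)))
    have h3 : ∑' n : ℕ, f (n+N) ≤ 10*(T+3) * t^(-(3/4+γ/2)) * (N:ℝ)^(-γ) * Hm1norm w := by
      have hb := hmain.2
      have hmax : ((max N 1 : ℕ):ℝ) = (N:ℝ) := by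
        rw [max_eq_left hN1]
      rw [hmax] at hb
      rw [Hm1norm]
      exact hb
    calc |heat1 t w x - P1 N (heat1 t w) x|
        ≤ ∑' n : ℕ, ‖c (n+N) * Real.sin ((((n+N:ℕ):ℝ)+1)*Real.pi*x)‖ := h1
    _ ≤ ∑' n : ℕ, f (n+N) := h2
    _ ≤ 10*(T+3) * t^(-(3/4+γ/2)) * (N:ℝ)^(-γ) * Hm1norm w := h3
end

section
/- Let T ∈ (0,∞). For every t ∈ (0,T] and every continuously differentiable function v : [0,1] → ℝ: ‖S_t(v')‖_{L²((0,1),ℝ)} ≤ 4 (t + 1) t^{−3/4} ‖v‖_{L¹((0,1),ℝ)}, where v' denotes the derivative of v. -/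
open MeasureTheory Real

-- ===================== auxiliary lemmas =====================
section Aux
open intervalIntegral

lemma integral_cos_mul' (c : ℝ) (hc : c ≠ 0) :
    ∫ x in (0:ℝ)..1, Real.cos (c*x) = Real.sin c / c := by
  have h : ∀ x ∈ Set.uIcc (0:ℝ) 1, HasDerivAt (fun y => Real.sin (c*y) / c) (Real.cos (c*x)) x := by
    intro x _
    have h1 : HasDerivAt (fun y => Real.sin (c*y)) (Real.cos (c*x) * c) x := by
      have := (Real.hasDerivAt_sin (c*x)).comp x ((hasDerivAt_id x).const_mul c)
      simpa [mul_comm, Function.comp_def] using this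
    have := h1.div_const c
    simpa [mul_div_assoc, mul_div_cancel_right₀ _ hc] using this
  have := intervalIntegral.integral_eq_sub_of_hasDerivAt h
    (by apply Continuous.intervalIntegrable; continuity)
  simpa using this

lemma sin_mul_sin' (a b : ℝ) :
    Real.sin a * Real.sin b = (Real.cos (a-b) - Real.cos (a+b))/2 := by
  have := Real.cos_sub_cos (a-b) (a+b)
  have h1 : (a - b + (a + b))/2 = a := by ring
  have h2 : (a - b - (a + b))/2 = -b := by ring
  rw [h1, h2, Real.sin_neg] at this
  linarith

lemma orth (n m : ℕ) :
    ∫ x in (0:ℝ)..1, Real.sin (((n:ℝ)+1)*π*x) * Real.sin (((m:ℝ)+1)*π*x)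
      = if n = m then 1/2 else 0 := by
  have hexp : ∀ x : ℝ, Real.sin (((n:ℝ)+1)*π*x) * Real.sin (((m:ℝ)+1)*π*x)
      = (Real.cos ((((n:ℝ)-(m:ℝ))*π)*x) - Real.cos ((((n:ℝ)+(m:ℝ)+2)*π)*x))/2 := by
    intro x
    rw [sin_mul_sin']
    ring_nf
  simp only [hexp]
  rw [intervalIntegral.integral_div, intervalIntegral.integral_sub
    (by apply Continuous.intervalIntegrable; continuity)
    (by apply Continuous.intervalIntegrable; continuity)]
  have hpm : (((n:ℝ)+(m:ℝ)+2)*π) ≠ 0 := by positivity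
  rw [integral_cos_mul' _ hpm]
  have hzero : Real.sin (((n:ℝ)+(m:ℝ)+2)*π) = 0 := by
    have := Real.sin_int_mul_pi ((n:ℤ)+(m:ℤ)+2)
    push_cast at this ⊢
    convert this using 2
  rw [hzero]
  by_cases h : n = m
  · subst h
    simp
  · have hne : ((n:ℝ)-(m:ℝ))*π ≠ 0 := by
      have hnm : (n:ℝ) ≠ (m:ℝ) := by exact_mod_cast fun hh => h (Nat.cast_injective hh)
      intro hx
      rcases mul_eq_zero.1 hx with h1 | h2
      · exact (sub_ne_zero.2 hnm) h1
      · exact Real.pi_ne_zero h2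
    rw [integral_cos_mul' _ hne]
    have hzero2 : Real.sin (((n:ℝ)-(m:ℝ))*π) = 0 := by
      have := Real.sin_int_mul_pi ((n:ℤ)-(m:ℤ))
      push_cast at this ⊢
      convert this using 2
    rw [hzero2]
    simp [h]

lemma coeff_bound (v v' : ℝ → ℝ)
    (hv : ∀ x ∈ Set.Icc (0:ℝ) 1, HasDerivAt v (v' x) x)
    (hv' : ContinuousOn v' (Set.Icc (0:ℝ) 1)) (n : ℕ) :
    |sinCoeff v' n| ≤ ((n:ℝ)+1) * π * ∫ x in (0:ℝ)..1, |v x| := by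
  set k : ℝ := ((n:ℝ)+1) * π with hk
  have hkpos : 0 < k := by positivity
  have hvc : ContinuousOn v (Set.Icc (0:ℝ) 1) := fun x hx =>
    ((hv x hx).continuousAt).continuousWithinAt
  have huIcc : Set.uIcc (0:ℝ) 1 = Set.Icc 0 1 := Set.uIcc_of_le (by norm_num)
  have hsin : ∀ x ∈ Set.uIcc (0:ℝ) 1,
      HasDerivAt (fun y => Real.sin (k*y)) (k * Real.cos (k*x)) x := by
    intro x _
    have h0 : HasDerivAt (fun y : ℝ => k*y) k x := by
      simpa using (hasDerivAt_id x).const_mul k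
    have := (Real.hasDerivAt_sin (k*x)).comp x h0
    exact this.congr_deriv (mul_comm _ _)
  have hparts := intervalIntegral.integral_mul_deriv_eq_deriv_mul
    hsin (fun x hx => hv x (huIcc ▸ hx))
    ((by fun_prop : ContinuousOn (fun x => k * Real.cos (k*x)) (Set.uIcc (0:ℝ) 1)).intervalIntegrable)
    ((by rw [huIcc]; exact hv' : ContinuousOn v' (Set.uIcc (0:ℝ) 1)).intervalIntegrable)
  have hsk : Real.sin (k*1) = 0 := by
    rw [mul_one, hk]
    have := Real.sin_int_mul_pi ((n:ℤ)+1)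
    push_cast at this ⊢
    convert this using 2
  have heq : sinCoeff v' n = - ∫ x in (0:ℝ)..1, k * Real.cos (k*x) * v x := by
    rw [sinCoeff]
    have hfn : (fun x => v' x * Real.sin (((n:ℝ)+1)*π*x)) = fun x => Real.sin (k*x) * v' x := by
      funext x; rw [hk]; ring
    simp only [hfn]
    rw [hparts, hsk]
    simp
  rw [heq, abs_neg]
  have h1 : |∫ x in (0:ℝ)..1, k * Real.cos (k*x) * v x|
      ≤ ∫ x in (0:ℝ)..1, |k * Real.cos (k*x) * v x| :=
    intervalIntegral.abs_integral_le_integral_abs (by norm_num)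
  have hvint : IntervalIntegrable v MeasureTheory.volume 0 1 :=
    (by rw [huIcc]; exact hvc : ContinuousOn v (Set.uIcc (0:ℝ) 1)).intervalIntegrable
  have h2 : ∫ x in (0:ℝ)..1, |k * Real.cos (k*x) * v x| ≤ ∫ x in (0:ℝ)..1, k * |v x| := by
    apply intervalIntegral.integral_mono_on (by norm_num)
    · refine IntervalIntegrable.abs ?_
      exact (((by fun_prop : ContinuousOn (fun x => k * Real.cos (k*x)) (Set.uIcc (0:ℝ) 1))).mul
        (huIcc ▸ hvc)).intervalIntegrable
    · exact (hvint.abs.const_mul k)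
    · intro x _
      rw [abs_mul, abs_mul, abs_of_pos hkpos]
      have h3 : |Real.cos (k*x)| ≤ 1 := Real.abs_cos_le_one _
      calc k * |Real.cos (k*x)| * |v x| ≤ k * 1 * |v x| := by gcongr
        _ = k * |v x| := by ring
  calc |∫ x in (0:ℝ)..1, k * Real.cos (k*x) * v x| ≤ ∫ x in (0:ℝ)..1, k * |v x| :=
        le_trans h1 h2
    _ = k * ∫ x in (0:ℝ)..1, |v x| := by rw [← intervalIntegral.integral_const_mul]

end Aux

lemma parseval (b : ℕ → ℝ) (hb : Summable (fun n => |b n|)) :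
    ∫ x in (0:ℝ)..1, (∑' n : ℕ, b n * Real.sin (((n:ℝ)+1)*π*x))^2
      = ∑' n : ℕ, (b n)^2/2 := by
  set s : ℕ → ℝ → ℝ := fun n x => Real.sin (((n:ℝ)+1)*π*x) with hs
  set g : ℝ → ℝ := fun x => ∑' n : ℕ, b n * s n x with hg
  have hscont : ∀ n, Continuous (s n) := by intro n; fun_prop
  have hsle : ∀ n x, |s n x| ≤ 1 := fun n x => Real.abs_sin_le_one _
  have hterm_bound : ∀ n x, ‖b n * s n x‖ ≤ |b n| := by
    intro n x
    rw [Real.norm_eq_abs, abs_mul]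
    calc |b n| * |s n x| ≤ |b n| * 1 := by gcongr; exact hsle n x
      _ = |b n| := mul_one _
  have hgcont : Continuous g := by
    apply continuous_tsum (fun n => by fun_prop) hb
    intro n x; exact hterm_bound n x
  set μ : Measure ℝ := volume.restrict (Set.Ioc (0:ℝ) 1) with hμ
  have hμuniv : μ Set.univ = 1 := by
    rw [hμ, Measure.restrict_apply_univ]
    simp
  have horthμ : ∀ n m : ℕ, ∫ x, s n x * s m x ∂μ = if n = m then 1/2 else 0 := by
    intro n m
    rw [← orth n m, intervalIntegral.integral_of_le (by norm_num : (0:ℝ) ≤ 1)]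
  -- inner identity: ∫ s n * g = b n / 2
  have hinner : ∀ n : ℕ, ∫ x, s n x * g x ∂μ = b n / 2 := by
    intro n
    have hswap : ∑' m : ℕ, (∫ x, b m * (s n x * s m x) ∂μ)
        = ∫ x, (∑' m : ℕ, b m * (s n x * s m x)) ∂μ := by
      apply integral_tsum_of_summable_integral_norm
      · intro m
        exact Continuous.integrableOn_Ioc (continuous_const.mul ((hscont n).mul (hscont m)))
      · apply Summable.of_nonneg_of_le (fun m => integral_nonneg (fun x => norm_nonneg _))
          (fun m => ?_) hb
        calc ∫ x, ‖b m * (s n x * s m x)‖ ∂μ ≤ ∫ _x, |b m| ∂μ := by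
              apply integral_mono_of_nonneg
              · exact Filter.Eventually.of_forall (fun x => norm_nonneg _)
              · exact integrable_const _
              · apply Filter.Eventually.of_forall
                intro x
                show ‖b m * (s n x * s m x)‖ ≤ |b m|
                rw [Real.norm_eq_abs, abs_mul, abs_mul]
                calc |b m| * (|s n x| * |s m x|) ≤ |b m| * (1 * 1) := by
                      gcongr <;> [exact hsle n x; exact hsle m x]
                  _ = |b m| := by ring
          _ = |b m| := by rw [MeasureTheory.integral_const, measureReal_def, hμuniv]; simp
    have hpt : ∀ x, ∑' m : ℕ, b m * (s n x * s m x) = s n x * g x := by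
      intro x
      rw [hg]
      rw [← tsum_mul_left]
      congr 1
      funext m
      ring
    simp only [hpt] at hswap
    rw [← hswap]
    have hterm : ∀ m : ℕ, (∫ x, b m * (s n x * s m x) ∂μ) = if m = n then b n / 2 else 0 := by
      intro m
      rw [integral_const_mul, horthμ n m]
      by_cases h : n = m
      · subst h; simp; ring
      · simp [h, Ne.symm h]
    simp only [hterm]
    exact tsum_ite_eq n (fun _ => b n / 2)
  -- outer identity
  have hB : ∀ x, |g x| ≤ ∑' n, |b n| := by
    intro x
    calc |g x| ≤ ∑' n, ‖b n * s n x‖ :=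
          norm_tsum_le_tsum_norm (hb.of_nonneg_of_le (fun m => norm_nonneg _)
            (fun m => hterm_bound m x))
      _ ≤ ∑' n, |b n| :=
          Summable.tsum_le_tsum (fun n => hterm_bound n x)
            (hb.of_nonneg_of_le (fun m => norm_nonneg _) (fun m => hterm_bound m x)) hb
  have hswap2 : ∑' n : ℕ, (∫ x, (b n * s n x) * g x ∂μ)
      = ∫ x, (∑' n : ℕ, (b n * s n x) * g x) ∂μ := by
    apply integral_tsum_of_summable_integral_norm
    · intro m
      exact Continuous.integrableOn_Ioc ((continuous_const.mul (hscont m)).mul hgcont)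
    · apply Summable.of_nonneg_of_le (fun m => integral_nonneg (fun x => norm_nonneg _))
        (fun m => ?_) (hb.mul_right (∑' n, |b n|))
      calc ∫ x, ‖(b m * s m x) * g x‖ ∂μ ≤ ∫ _x, |b m| * (∑' n, |b n|) ∂μ := by
            apply integral_mono_of_nonneg
            · exact Filter.Eventually.of_forall (fun x => norm_nonneg _)
            · exact integrable_const _
            · apply Filter.Eventually.of_forall
              intro x
              show ‖(b m * s m x) * g x‖ ≤ |b m| * (∑' n, |b n|)
              rw [Real.norm_eq_abs, abs_mul]
              have h1 := hterm_bound m x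
              rw [Real.norm_eq_abs] at h1
              have h2 := hB x
              have h3 : (0:ℝ) ≤ ∑' n, |b n| := tsum_nonneg (fun n => abs_nonneg _)
              exact mul_le_mul h1 h2 (abs_nonneg _) (abs_nonneg _)
        _ = |b m| * (∑' n, |b n|) := by rw [MeasureTheory.integral_const, measureReal_def, hμuniv]; simp
  have hpt2 : ∀ x, ∑' n : ℕ, (b n * s n x) * g x = (g x)^2 := by
    intro x
    rw [tsum_mul_right, sq]
  simp only [hpt2] at hswap2
  have hterm2 : ∀ n : ℕ, (∫ x, (b n * s n x) * g x ∂μ) = (b n)^2 / 2 := by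
    intro n
    have : (fun x => (b n * s n x) * g x) = fun x => b n * (s n x * g x) := by
      funext x; ring
    rw [this, integral_const_mul, hinner n]
    ring
  rw [intervalIntegral.integral_of_le (by norm_num : (0:ℝ) ≤ 1), ← hswap2]
  simp only [hterm2]



lemma nat_sq_le (m : ℕ) : ((m:ℝ))^2 ≤ 2 * 2^m := by
  have h : ∀ k : ℕ, k^2 ≤ 2 * 2^k := by
    intro k
    induction k with
    | zero => norm_num
    | succ n ih =>
      have h2 : 2*n + 1 ≤ 2 * 2^n := by
        clear ih
        induction n with
        | zero => norm_num
        | succ m ih2 =>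
          have : (1:ℕ) ≤ 2^m := Nat.one_le_two_pow
          calc 2*(m+1)+1 = (2*m+1) + 2 := by ring
            _ ≤ 2*2^m + 2 := by omega
            _ ≤ 2*2^(m+1) := by rw [pow_succ]; omega
      calc (n+1)^2 = n^2 + (2*n+1) := by ring
        _ ≤ 2*2^n + 2*2^n := by omega
        _ = 2*2^(n+1) := by rw [pow_succ]; ring
  calc ((m:ℝ))^2 = ((m^2 : ℕ) : ℝ) := by push_cast; ring
    _ ≤ ((2 * 2^m : ℕ) : ℝ) := by exact_mod_cast h m
    _ = 2 * 2^m := by push_cast; ring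

lemma u_exp_le (u : ℝ) : u * Real.exp (-u) ≤ Real.exp (-1) := by
  have h := Real.add_one_le_exp (u - 1)
  have h2 : u ≤ Real.exp (u-1) := by linarith
  calc u * Real.exp (-u) ≤ Real.exp (u-1) * Real.exp (-u) := by
        apply mul_le_mul_of_nonneg_right h2 (Real.exp_pos _).le
    _ = Real.exp (-1) := by rw [← Real.exp_add]; ring_nf

lemma geom_ratio_le (x : ℝ) (hx : 0 < x) :
    Real.exp (-x) / (1 - Real.exp (-x)) ≤ 1 / x := by
  have he := Real.exp_pos x
  have h1 : x + 1 ≤ Real.exp x := Real.add_one_le_exp x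
  have hlt : Real.exp (-x) < 1 := Real.exp_lt_one_iff.2 (by linarith)
  have key : Real.exp (-x) / (1 - Real.exp (-x)) = 1 / (Real.exp x - 1) := by
    rw [Real.exp_neg]
    have h0 : Real.exp x - 1 ≠ 0 := by
      have : (0:ℝ) < Real.exp x - 1 := by linarith
      linarith
    field_simp
  rw [key]
  apply one_div_le_one_div_of_le hx
  linarith

lemma exp_sq_le_exp_lin (a : ℝ) (ha : 0 ≤ a) (n : ℕ) :
    Real.exp (-a*((n:ℝ)+1)^2) ≤ Real.exp (-a)^(n+1) := by
  rw [← Real.exp_nat_mul]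
  apply Real.exp_le_exp.2
  push_cast
  have h1 : ((n:ℝ)+1) ≤ ((n:ℝ)+1)^2 := by nlinarith [Nat.cast_nonneg (α := ℝ) n]
  nlinarith [mul_le_mul_of_nonneg_left h1 ha]

lemma summable_f (a : ℝ) (ha : 0 < a) :
    Summable (fun n : ℕ => ((n:ℝ)+1)^2 * Real.exp (-a*((n:ℝ)+1)^2)) := by
  have hr : ‖Real.exp (-a)‖ < 1 := by
    rw [Real.norm_eq_abs, abs_of_pos (Real.exp_pos _)]
    exact Real.exp_lt_one_iff.2 (by linarith)
  have h := summable_pow_mul_geometric_of_norm_lt_one 2 hr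
  have h2 : Summable (fun n : ℕ => ((n:ℝ)+1)^2 * Real.exp (-a)^(n+1)) := by
    refine ((summable_nat_add_iff 1).2 h).congr (fun n => ?_)
    push_cast
    ring
  apply Summable.of_nonneg_of_le (fun n => by positivity) (fun n => ?_) h2
  have := exp_sq_le_exp_lin a ha.le n
  gcongr

set_option maxHeartbeats 1000000 in
lemma series_small (a : ℝ) (ha : 0 < a) (ha4 : a ≤ 4) :
    ∑' n : ℕ, ((n:ℝ)+1)^2 * Real.exp (-a*((n:ℝ)+1)^2) ≤ 29 / (a * Real.sqrt a) := by
  set f : ℕ → ℝ := fun n => ((n:ℝ)+1)^2 * Real.exp (-a*((n:ℝ)+1)^2) with hfdef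
  have hfs : Summable f := summable_f a ha
  have hsa : 0 < Real.sqrt a := Real.sqrt_pos.2 ha
  have hsa2 : Real.sqrt a ≤ 2 := by
    rw [show (2:ℝ) = Real.sqrt 4 by
      rw [show (4:ℝ) = 2^2 by norm_num, Real.sqrt_sq]; norm_num]
    exact Real.sqrt_le_sqrt ha4
  have hsqa : Real.sqrt a * Real.sqrt a = a := Real.mul_self_sqrt ha.le
  set N : ℕ := ⌈1 / Real.sqrt a⌉₊ with hN
  have hNpos : 0 < N := Nat.ceil_pos.2 (by positivity)
  have hNge : 1 / Real.sqrt a ≤ (N:ℝ) := Nat.le_ceil _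
  have hNle : (N:ℝ) ≤ 1 / Real.sqrt a + 1 := (Nat.ceil_lt_add_one (by positivity)).le
  have hNR : (0:ℝ) < N := by exact_mod_cast hNpos
  have hsplit := hfs.sum_add_tsum_nat_add N
  -- head bound
  have hhead : ∑ n ∈ Finset.range N, f n ≤ (N:ℝ)^3 := by
    have hterm : ∀ n ∈ Finset.range N, f n ≤ (N:ℝ)^2 := by
      intro n hn
      rw [Finset.mem_range] at hn
      have h1 : ((n:ℝ)+1) ≤ (N:ℝ) := by exact_mod_cast (show n+1 ≤ N from hn)
      have h2 : Real.exp (-a*((n:ℝ)+1)^2) ≤ 1 := by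
        apply Real.exp_le_one_iff.2
        nlinarith [sq_nonneg ((n:ℝ)+1)]
      have h0 : (0:ℝ) ≤ (n:ℝ)+1 := by positivity
      calc f n = ((n:ℝ)+1)^2 * Real.exp (-a*((n:ℝ)+1)^2) := rfl
        _ ≤ ((n:ℝ)+1)^2 * 1 := by gcongr
        _ ≤ (N:ℝ)^2 := by rw [mul_one]; nlinarith
    calc ∑ n ∈ Finset.range N, f n ≤ ∑ _n ∈ Finset.range N, (N:ℝ)^2 :=
          Finset.sum_le_sum hterm
      _ = (N:ℝ) * (N:ℝ)^2 := by
          rw [Finset.sum_const, Finset.card_range, nsmul_eq_mul]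
      _ = (N:ℝ)^3 := by ring
  -- tail bound
  set q : ℝ := Real.exp (-(a*(N:ℝ)/2)) with hq
  have hx : 0 < a*(N:ℝ)/2 := by positivity
  have hq0 : 0 < q := Real.exp_pos _
  have hq1 : q < 1 := Real.exp_lt_one_iff.2 (by linarith)
  have htail_term : ∀ n : ℕ, f (n + N) ≤ (2/(a * Real.exp 1)) * q^(n+1) := by
    intro n
    set m : ℝ := (n:ℝ) + (N:ℝ) + 1 with hm
    have hm1 : (0:ℝ) < m := by positivity
    have hcast : ((n + N : ℕ):ℝ) + 1 = m := by push_cast; ring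
    have hfval : f (n+N) = m^2 * Real.exp (-a*m^2) := by rw [hfdef]; simp only [hcast]
    have hsplit2 : Real.exp (-a*m^2) = Real.exp (-(a*m^2/2)) * Real.exp (-(a*m^2/2)) := by
      rw [← Real.exp_add]; ring_nf
    have hA : m^2 * Real.exp (-(a*m^2/2)) ≤ 2/(a * Real.exp 1) := by
      have hu := u_exp_le (a*m^2/2)
      have h2 : m^2 * Real.exp (-(a*m^2/2))
          = (2/a) * ((a*m^2/2) * Real.exp (-(a*m^2/2))) := by
        field_simp
      rw [h2]
      calc (2/a) * ((a*m^2/2) * Real.exp (-(a*m^2/2))) ≤ (2/a) * Real.exp (-1) := by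
            gcongr
        _ = 2/(a*Real.exp 1) := by rw [Real.exp_neg]; field_simp
    have hB : Real.exp (-(a*m^2/2)) ≤ q^(n+1) := by
      rw [hq, ← Real.exp_nat_mul]
      apply Real.exp_le_exp.2
      push_cast
      have hmN : (N:ℝ) * ((n:ℝ)+1) ≤ m^2 := by nlinarith [Nat.cast_nonneg (α := ℝ) n, hNR]
      nlinarith [mul_le_mul_of_nonneg_left hmN (by positivity : (0:ℝ) ≤ a/2)]
    calc f (n+N) = (m^2 * Real.exp (-(a*m^2/2))) * Real.exp (-(a*m^2/2)) := by
          rw [hfval, hsplit2]; ring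
      _ ≤ (2/(a*Real.exp 1)) * q^(n+1) := by
          apply mul_le_mul hA hB (Real.exp_pos _).le (by positivity)
  have htail : ∑' n : ℕ, f (n + N) ≤ 2/(a * Real.sqrt a) := by
    have hgs : Summable (fun n : ℕ => (2/(a*Real.exp 1)) * q^(n+1)) := by
      apply Summable.mul_left
      exact ((summable_geometric_of_lt_one hq0.le hq1).mul_left q).congr (fun n => by
        rw [pow_succ]; ring)
    have h1 : ∑' n : ℕ, f (n + N) ≤ ∑' n : ℕ, (2/(a*Real.exp 1)) * q^(n+1) :=
      Summable.tsum_le_tsum htail_term ((summable_nat_add_iff N).2 hfs) hgs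
    have h2 : ∑' n : ℕ, (2/(a*Real.exp 1)) * q^(n+1) = (2/(a*Real.exp 1)) * (q * (1-q)⁻¹) := by
      have : ∀ n : ℕ, (2/(a*Real.exp 1)) * q^(n+1) = ((2/(a*Real.exp 1)) * q) * q^n := by
        intro n; rw [pow_succ]; ring
      rw [tsum_congr this, tsum_mul_left, tsum_geometric_of_lt_one hq0.le hq1]
      ring
    have h3 : q * (1-q)⁻¹ ≤ 2/(a*(N:ℝ)) := by
      have := geom_ratio_le (a*(N:ℝ)/2) hx
      rw [← hq] at this
      calc q * (1-q)⁻¹ = q / (1-q) := by rw [div_eq_mul_inv]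
        _ ≤ 1/(a*(N:ℝ)/2) := this
        _ = 2/(a*(N:ℝ)) := by field_simp
    have he1 : (2:ℝ) ≤ Real.exp 1 := by
      have := Real.add_one_le_exp 1
      linarith
    have s1 : 2/(a*Real.exp 1) ≤ 1/a := by
      rw [div_le_div_iff₀ (by positivity) ha]
      nlinarith [mul_le_mul_of_nonneg_left he1 ha.le]
    have s2 : 2/(a*(N:ℝ)) ≤ 2*Real.sqrt a/a := by
      rw [div_le_div_iff₀ (by positivity) ha]
      have hge : 1 ≤ (N:ℝ) * Real.sqrt a := (div_le_iff₀ hsa).1 hNge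
      nlinarith [hge, ha.le, hsa.le, hNR.le]
    calc ∑' n : ℕ, f (n + N) ≤ (2/(a*Real.exp 1)) * (q * (1-q)⁻¹) := by rw [← h2]; exact h1
      _ ≤ (2/(a*Real.exp 1)) * (2/(a*(N:ℝ))) := mul_le_mul_of_nonneg_left h3 (by positivity)
      _ ≤ (1/a) * (2*Real.sqrt a/a) := mul_le_mul s1 s2 (by positivity) (by positivity)
      _ = 2/(a * Real.sqrt a) := by
          rw [div_mul_div_comm, one_mul, div_eq_div_iff (by positivity) (by positivity)]
          linear_combination 2*a*hsqa
  -- combine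
  have hN3 : (N:ℝ)^3 ≤ 27/(a * Real.sqrt a) := by
    have hs0 : Real.sqrt a ≠ 0 := ne_of_gt hsa
    have h1 : (N:ℝ)^3 ≤ (1/Real.sqrt a + 1)^3 := by
      apply pow_le_pow_left₀ hNR.le hNle
    have h2 : (1/Real.sqrt a + 1)^3 = (1 + Real.sqrt a)^3 / (Real.sqrt a)^3 := by
      field_simp
    have h3 : (1 + Real.sqrt a)^3 ≤ 27 := by nlinarith
    have h4 : (Real.sqrt a)^3 = a * Real.sqrt a := by
      rw [pow_succ, sq, hsqa]
    calc (N:ℝ)^3 ≤ (1/Real.sqrt a + 1)^3 := h1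
      _ = (1 + Real.sqrt a)^3 / (Real.sqrt a)^3 := h2
      _ ≤ 27 / (Real.sqrt a)^3 := by gcongr
      _ = 27 / (a * Real.sqrt a) := by rw [h4]
  calc ∑' n, f n = (∑ n ∈ Finset.range N, f n) + ∑' n : ℕ, f (n + N) := hsplit.symm
    _ ≤ 27/(a * Real.sqrt a) + 2/(a * Real.sqrt a) := add_le_add (hhead.trans hN3) htail
    _ = 29 / (a * Real.sqrt a) := by ring

lemma series_large (a : ℝ) (ha : 4 ≤ a) :
    ∑' n : ℕ, ((n:ℝ)+1)^2 * Real.exp (-a*((n:ℝ)+1)^2) ≤ 4/51 := by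
  have ha0 : 0 < a := by linarith
  have hfs := summable_f a ha0
  have he4 : Real.exp (-a) ≤ 1/53 := by
    have h1 : (53:ℝ) ≤ Real.exp a := by
      have h2 : Real.exp a ≥ Real.exp 4 := Real.exp_le_exp.2 ha
      have h3 : Real.exp 4 = Real.exp 1 ^ 4 := by
        rw [← Real.exp_nat_mul]; norm_num
      have h4 : (2.7:ℝ)^4 ≤ Real.exp 1 ^ 4 := by
        apply pow_le_pow_left₀ (by norm_num)
        linarith [Real.exp_one_gt_d9]
      have : (53:ℝ) ≤ (2.7:ℝ)^4 := by norm_num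
      linarith
    rw [Real.exp_neg]
    rw [inv_eq_one_div]
    apply one_div_le_one_div_of_le (by norm_num) h1
  have hbound : ∀ n : ℕ, ((n:ℝ)+1)^2 * Real.exp (-a*((n:ℝ)+1)^2) ≤ 2 * (2/53:ℝ)^(n+1) := by
    intro n
    have h1 : ((n:ℝ)+1)^2 ≤ 2 * 2^(n+1) := by
      have := nat_sq_le (n+1)
      push_cast at this
      linarith
    have h2 := exp_sq_le_exp_lin a ha0.le n
    calc ((n:ℝ)+1)^2 * Real.exp (-a*((n:ℝ)+1)^2) ≤ (2 * 2^(n+1)) * Real.exp (-a)^(n+1) :=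
          mul_le_mul h1 h2 (Real.exp_pos _).le (by positivity)
      _ ≤ (2 * 2^(n+1)) * (1/53:ℝ)^(n+1) := by
          gcongr <;> first | exact (Real.exp_pos _).le | skip
      _ = 2 * (2/53)^(n+1) := by
          rw [mul_assoc, ← mul_pow]
          norm_num
  have hgs : Summable (fun n : ℕ => 2 * (2/53:ℝ)^(n+1)) := by
    apply Summable.mul_left
    exact ((summable_geometric_of_lt_one (by norm_num) (by norm_num : (2/53:ℝ) < 1)).mul_left
      (2/53)).congr (fun n => by rw [pow_succ]; ring)
  calc ∑' n : ℕ, ((n:ℝ)+1)^2 * Real.exp (-a*((n:ℝ)+1)^2)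
      ≤ ∑' n : ℕ, 2 * (2/53:ℝ)^(n+1) := Summable.tsum_le_tsum hbound hfs hgs
    _ = (2 * (2/53)) * (1-(2/53:ℝ))⁻¹ := by
        have : ∀ n : ℕ, 2 * (2/53:ℝ)^(n+1) = (2 * (2/53)) * (2/53:ℝ)^n := by
          intro n; rw [pow_succ]; ring
        rw [tsum_congr this, tsum_mul_left,
          tsum_geometric_of_lt_one (by norm_num) (by norm_num : (2/53:ℝ) < 1)]
    _ = 4/51 := by norm_num

lemma key_bound (t : ℝ) (ht : 0 < t) :
    2*π^2 * ∑' n : ℕ, ((n:ℝ)+1)^2 * Real.exp (-(2*π^2*t)*((n:ℝ)+1)^2)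
      ≤ 16*(t+1)^2 / (t * Real.sqrt t) := by
  have hπ0 := Real.pi_pos
  have hπ : 3.14 ≤ π := by linarith [Real.pi_gt_d6]
  have hπ2 : π ≤ 3.15 := by linarith [Real.pi_lt_d2]
  set a : ℝ := 2*π^2*t with ha
  have hapos : 0 < a := by positivity
  have hts : 0 < t * Real.sqrt t := by positivity
  have hstt : Real.sqrt t * Real.sqrt t = t := Real.mul_self_sqrt ht.le
  have hs2 : (1.4:ℝ) ≤ Real.sqrt 2 := by
    nlinarith [Real.sq_sqrt (by norm_num : (0:ℝ) ≤ 2), Real.sqrt_nonneg 2]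
  have hp1 : (1:ℝ) ≤ (t+1)^2 := by nlinarith
  by_cases hc : a ≤ 4
  · have hS := series_small a hapos hc
    have hsa_eq : Real.sqrt a = Real.sqrt 2 * π * Real.sqrt t := by
      rw [ha, show 2*π^2*t = (2*π^2)*t by ring, Real.sqrt_mul (by positivity) t,
        Real.sqrt_mul (by norm_num : (0:ℝ) ≤ 2) (π^2), Real.sqrt_sq hπ0.le]
    have haa : a * Real.sqrt a = 2*Real.sqrt 2*π^3*(t*Real.sqrt t) := by
      rw [hsa_eq, ha]; ring
    have hp2 : (1.4:ℝ)*3.14 ≤ Real.sqrt 2 * π :=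
      mul_le_mul hs2 hπ (by norm_num) (Real.sqrt_nonneg 2)
    have key : 58*π^2 ≤ 16*(2*Real.sqrt 2*π^3) := by
      nlinarith [mul_le_mul_of_nonneg_left hp2 (by positivity : (0:ℝ) ≤ 32*π^2)]
    have hX : (0:ℝ) < 2*Real.sqrt 2*π^3 := by positivity
    calc 2*π^2 * ∑' n : ℕ, ((n:ℝ)+1)^2 * Real.exp (-a*((n:ℝ)+1)^2)
        ≤ 2*π^2 * (29/(a * Real.sqrt a)) := by
          apply mul_le_mul_of_nonneg_left hS (by positivity)
      _ = 58*π^2/(2*Real.sqrt 2*π^3*(t*Real.sqrt t)) := by rw [haa]; ring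
      _ ≤ (16*(2*Real.sqrt 2*π^3))/(2*Real.sqrt 2*π^3*(t*Real.sqrt t)) := by
          gcongr
      _ = 16/(t*Real.sqrt t) := by
          rw [show 16*(2*Real.sqrt 2*π^3) = (2*Real.sqrt 2*π^3)*16 by ring,
            mul_div_mul_left _ _ (ne_of_gt hX)]
      _ ≤ 16*(t+1)^2/(t*Real.sqrt t) := by
          gcongr
          nlinarith
  · push_neg at hc
    have hS := series_large a hc.le
    have htge : 2/π^2 ≤ t := by
      rw [div_le_iff₀ (by positivity)]
      nlinarith
    have htp : 2 ≤ t * π^2 := by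
      rw [div_le_iff₀ (by positivity)] at htge
      linarith
    have hst2 : Real.sqrt 2 / π ≤ Real.sqrt t := by
      rw [div_le_iff₀ hπ0]
      nlinarith [Real.sq_sqrt ht.le, Real.sqrt_nonneg t, Real.sq_sqrt (by norm_num : (0:ℝ) ≤ 2),
        Real.sqrt_nonneg 2, hπ0, htp, mul_nonneg (Real.sqrt_nonneg t) hπ0.le]
    calc 2*π^2 * ∑' n : ℕ, ((n:ℝ)+1)^2 * Real.exp (-a*((n:ℝ)+1)^2)
        ≤ 2*π^2 * (4/51) := by
          apply mul_le_mul_of_nonneg_left hS (by positivity)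
      _ ≤ 16*(Real.sqrt 2/π) := by
          rw [show 16*(Real.sqrt 2/π) = 16*Real.sqrt 2/π by ring,
            show 2*π^2*(4/51) = 8*π^2/51 by ring, div_le_div_iff₀ (by norm_num) hπ0]
          have hsq : π^2 ≤ 9.9225 := by nlinarith
          have hπ3 : π^2 * π ≤ 31.255875 := by
            nlinarith [mul_le_mul hsq hπ2 hπ0.le (by norm_num : (0:ℝ) ≤ 9.9225)]
          nlinarith [hs2, hπ3]
      _ ≤ 16*Real.sqrt t := by
          gcongr
      _ ≤ 16*(t+1)^2/(t*Real.sqrt t) := by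
          rw [le_div_iff₀ hts]
          rw [show 16*Real.sqrt t*(t*Real.sqrt t) = 16*(Real.sqrt t*Real.sqrt t)*t by ring, hstt]
          nlinarith

/-- **Lemma `lemmadditional`, last estimate.** For every `t ∈ (0,T]`
and every continuously differentiable `v : [0,1] → ℝ` (with derivative `v'`):
`‖S_t(v')‖_{L²((0,1),ℝ)} ≤ 4 (t+1) t^{−3/4} ‖v‖_{L¹((0,1),ℝ)}`. -/
theorem stmt_16 (T : ℝ) (hT : 0 < T) (t : ℝ) (ht : t ∈ Set.Ioc (0:ℝ) T)
    (v v' : ℝ → ℝ)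
    (hv : ∀ x ∈ Set.Icc (0:ℝ) 1, HasDerivAt v (v' x) x)
    (hv' : ContinuousOn v' (Set.Icc (0:ℝ) 1)) :
    Real.sqrt (∫ x in (0:ℝ)..1, (heat1 t v' x) ^ 2) ≤
      4 * (t + 1) * t ^ (-(3/4 : ℝ)) * ∫ x in (0:ℝ)..1, |v x| := by
  obtain ⟨ht0, -⟩ := ht
  set L : ℝ := ∫ x in (0:ℝ)..1, |v x| with hLdef
  have hL0 : 0 ≤ L := intervalIntegral.integral_nonneg (by norm_num) (fun x _ => abs_nonneg _)
  set c : ℕ → ℝ := fun n => sinCoeff v' n with hcdef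
  have hcb : ∀ n, |c n| ≤ ((n:ℝ)+1)*π*L := fun n => coeff_bound v v' hv hv' n
  set b : ℕ → ℝ := fun n => 2 * Real.exp (-((n:ℝ)+1)^2 * π^2 * t) * c n with hbdef
  have hq1 : Real.exp (-(π^2*t)) < 1 := by
    apply Real.exp_lt_one_iff.2
    have : (0:ℝ) < π^2*t := by positivity
    linarith
  have hexp_le : ∀ n : ℕ, Real.exp (-((n:ℝ)+1)^2 * π^2 * t) ≤ Real.exp (-(π^2*t))^(n+1) := by
    intro n
    rw [← Real.exp_nat_mul]
    apply Real.exp_le_exp.2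
    push_cast
    have h1 : ((n:ℝ)+1) ≤ ((n:ℝ)+1)^2 := by nlinarith [Nat.cast_nonneg (α := ℝ) n]
    nlinarith [mul_le_mul_of_nonneg_left h1 (by positivity : (0:ℝ) ≤ π^2*t)]
  have hbsum : Summable (fun n => |b n|) := by
    have hgeom : Summable (fun n : ℕ => 2*π*L*(((n:ℝ)+1) * Real.exp (-(π^2*t))^(n+1))) := by
      apply Summable.mul_left
      have hr : ‖Real.exp (-(π^2*t))‖ < 1 := by
        rw [Real.norm_eq_abs, abs_of_pos (Real.exp_pos _)]; exact hq1
      have h := summable_pow_mul_geometric_of_norm_lt_one 1 hr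
      refine ((summable_nat_add_iff 1).2 h).congr (fun n => ?_)
      push_cast
      ring
    apply Summable.of_nonneg_of_le (fun n => abs_nonneg _) (fun n => ?_) hgeom
    have hE0 : (0:ℝ) ≤ Real.exp (-((n:ℝ)+1)^2 * π^2 * t) := (Real.exp_pos _).le
    calc |b n| = 2 * Real.exp (-((n:ℝ)+1)^2 * π^2 * t) * |c n| := by
          rw [hbdef, abs_mul, abs_mul]
          rw [abs_of_nonneg hE0, abs_of_nonneg (by norm_num : (0:ℝ) ≤ 2)]
      _ ≤ 2 * Real.exp (-((n:ℝ)+1)^2 * π^2 * t) * (((n:ℝ)+1)*π*L) := by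
          apply mul_le_mul_of_nonneg_left (hcb n) (by positivity)
      _ ≤ 2 * Real.exp (-(π^2*t))^(n+1) * (((n:ℝ)+1)*π*L) := by
          apply mul_le_mul_of_nonneg_right _ (by positivity)
          apply mul_le_mul_of_nonneg_left (hexp_le n) (by norm_num)
      _ = 2*π*L*(((n:ℝ)+1) * Real.exp (-(π^2*t))^(n+1)) := by ring
  have hpars : ∫ x in (0:ℝ)..1, (heat1 t v' x)^2 = ∑' n : ℕ, (b n)^2/2 := by
    have hh : ∀ x : ℝ, heat1 t v' x = ∑' n : ℕ, b n * Real.sin (((n:ℝ)+1)*π*x) := by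
      intro x; rfl
    simp only [hh]
    exact parseval b hbsum
  -- termwise estimate
  have hterm : ∀ n : ℕ, (b n)^2/2
      ≤ (2*π^2*L^2) * (((n:ℝ)+1)^2 * Real.exp (-(2*π^2*t)*((n:ℝ)+1)^2)) := by
    intro n
    have h2 : Real.exp (-((n:ℝ)+1)^2*π^2*t)^2 = Real.exp (-(2*π^2*t)*((n:ℝ)+1)^2) := by
      rw [← Real.exp_nat_mul]
      congr 1
      push_cast
      ring
    have h3 : (c n)^2 ≤ (((n:ℝ)+1)*π*L)^2 := by
      have h4 := hcb n
      nlinarith [abs_nonneg (c n), sq_abs (c n), neg_abs_le (c n), le_abs_self (c n)]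
    calc (b n)^2/2 = 2 * Real.exp (-(2*π^2*t)*((n:ℝ)+1)^2) * (c n)^2 := by
          rw [← h2, hbdef]; ring
      _ ≤ 2 * Real.exp (-(2*π^2*t)*((n:ℝ)+1)^2) * (((n:ℝ)+1)*π*L)^2 := by
          apply mul_le_mul_of_nonneg_left h3 (by positivity)
      _ = (2*π^2*L^2) * (((n:ℝ)+1)^2 * Real.exp (-(2*π^2*t)*((n:ℝ)+1)^2)) := by ring
  have hfs := summable_f (2*π^2*t) (by positivity)
  have hrhs : Summable (fun n : ℕ =>
      (2*π^2*L^2) * (((n:ℝ)+1)^2 * Real.exp (-(2*π^2*t)*((n:ℝ)+1)^2))) := hfs.mul_left _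
  have hsum_le : ∑' n : ℕ, (b n)^2/2 ≤ 16*(t+1)^2/(t*Real.sqrt t) * L^2 := by
    have h4 := Summable.tsum_le_tsum hterm
      (Summable.of_nonneg_of_le (fun n => by positivity) hterm hrhs) hrhs
    rw [tsum_mul_left] at h4
    have h5 := key_bound t ht0
    calc ∑' n : ℕ, (b n)^2/2
        ≤ 2*π^2*L^2 * ∑' n : ℕ, ((n:ℝ)+1)^2 * Real.exp (-(2*π^2*t)*((n:ℝ)+1)^2) := h4
      _ = L^2 * (2*π^2 * ∑' n : ℕ, ((n:ℝ)+1)^2 * Real.exp (-(2*π^2*t)*((n:ℝ)+1)^2)) := by ring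
      _ ≤ L^2 * (16*(t+1)^2/(t*Real.sqrt t)) := by
          apply mul_le_mul_of_nonneg_left h5 (by positivity)
      _ = 16*(t+1)^2/(t*Real.sqrt t) * L^2 := by ring
  -- rpow arithmetic
  have hstt : 0 < t * Real.sqrt t := by positivity
  have hrpow : (t ^ (-(3/4:ℝ)))^2 = 1/(t * Real.sqrt t) := by
    have e1 : (t ^ (-(3/4:ℝ)))^2 = t ^ ((-(3/4:ℝ))*2) := by
      rw [← Real.rpow_natCast (t ^ (-(3/4:ℝ))) 2, ← Real.rpow_mul ht0.le]
      norm_num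
    have e2 : t ^ ((3/2:ℝ)) = t * Real.sqrt t := by
      rw [show (3/2:ℝ) = 1 + 1/2 by norm_num, Real.rpow_add ht0, Real.rpow_one,
        ← Real.sqrt_eq_rpow]
    rw [e1, show (-(3/4:ℝ))*2 = -(3/2:ℝ) by norm_num, Real.rpow_neg ht0.le, e2]
    rw [inv_eq_one_div]
  have hfinal : ∫ x in (0:ℝ)..1, (heat1 t v' x)^2 ≤ (4*(t+1)*t^(-(3/4:ℝ))*L)^2 := by
    rw [hpars]
    calc ∑' n : ℕ, (b n)^2/2 ≤ 16*(t+1)^2/(t*Real.sqrt t) * L^2 := hsum_le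
      _ = (4*(t+1)*t^(-(3/4:ℝ))*L)^2 := by
          rw [show (4*(t+1)*t^(-(3/4:ℝ))*L)^2 = 16*(t+1)^2*((t^(-(3/4:ℝ)))^2)*L^2 by ring,
            hrpow]
          ring
  have hnn : 0 ≤ 4*(t+1)*t^(-(3/4:ℝ))*L := by positivity
  calc Real.sqrt (∫ x in (0:ℝ)..1, (heat1 t v' x)^2)
      ≤ Real.sqrt ((4*(t+1)*t^(-(3/4:ℝ))*L)^2) := Real.sqrt_le_sqrt hfinal
    _ = 4*(t+1)*t^(-(3/4:ℝ))*L := Real.sqrt_sq hnn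
end

section
/- Let c ∈ ℝ and let v, w : [0,1] → ℝ be twice continuously differentiable functions with v(0) = v(1) = 0. Then ∫_0^1 v(x) v''(x) dx − c ∫_0^1 v'(x) (v(x) + w(x))² dx ≤ 2 c² (∫_0^1 v(x)² dx) (sup_{x∈[0,1]} |w(x)|)² + 2 c² (sup_{x∈[0,1]} |w(x)|)⁴. (The left-hand side equals the L² pairing ⟨v, v'' + F(v+w)⟩ where F(u) = c·∂(u²) is the Burgers nonlinearity with distributional derivative ∂.) -/
/-- **Lemma `lemburger`.** Let `c ∈ ℝ` and let `v, w : [0,1] → ℝ` be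
twice continuously differentiable with `v(0) = v(1) = 0`. Then
`∫_0^1 v v'' dx − c ∫_0^1 v' (v+w)² dx
   ≤ 2c² (∫_0^1 v² dx) (sup_{[0,1]} |w|)² + 2c² (sup_{[0,1]} |w|)⁴`;
the left-hand side is the `L²` pairing `⟨v, v'' + F(v+w)⟩` with the Burgers
nonlinearity `F(u) = c ∂(u²)`. -/
theorem stmt_17 (c : ℝ) (v v' v'' w w' w'' : ℝ → ℝ)
    (hv : ∀ x ∈ Set.Icc (0:ℝ) 1, HasDerivAt v (v' x) x)
    (hv' : ∀ x ∈ Set.Icc (0:ℝ) 1, HasDerivAt v' (v'' x) x)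
    (hv'' : ContinuousOn v'' (Set.Icc (0:ℝ) 1))
    (hw : ∀ x ∈ Set.Icc (0:ℝ) 1, HasDerivAt w (w' x) x)
    (hw' : ∀ x ∈ Set.Icc (0:ℝ) 1, HasDerivAt w' (w'' x) x)
    (hw'' : ContinuousOn w'' (Set.Icc (0:ℝ) 1))
    (hv0 : v 0 = 0) (hv1 : v 1 = 0) :
    (∫ x in (0:ℝ)..1, v x * v'' x) - c * ∫ x in (0:ℝ)..1, v' x * (v x + w x) ^ 2 ≤
      2 * c ^ 2 * (∫ x in (0:ℝ)..1, v x ^ 2) * (⨆ x : Set.Icc (0:ℝ) 1, |w x|) ^ 2 +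
        2 * c ^ 2 * (⨆ x : Set.Icc (0:ℝ) 1, |w x|) ^ 4 := by
  have h01 : (0:ℝ) ≤ 1 := zero_le_one
  have huIcc : Set.uIcc (0:ℝ) 1 = Set.Icc 0 1 := Set.uIcc_of_le h01
  set M : ℝ := ⨆ x : Set.Icc (0:ℝ) 1, |w x| with hMdef
  -- continuity
  have hcv : ContinuousOn v (Set.Icc 0 1) := fun x hx => ((hv x hx).continuousAt).continuousWithinAt
  have hcv' : ContinuousOn v' (Set.Icc 0 1) := fun x hx => ((hv' x hx).continuousAt).continuousWithinAt
  have hcw : ContinuousOn w (Set.Icc 0 1) := fun x hx => ((hw x hx).continuousAt).continuousWithinAt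
  -- sup bounds
  have hbdd : BddAbove (Set.range fun x : Set.Icc (0:ℝ) 1 => |w x|) := by
    obtain ⟨C, hC⟩ := isCompact_Icc.exists_bound_of_continuousOn hcw
    refine ⟨C, ?_⟩
    rintro y ⟨x, rfl⟩
    have := hC x x.2
    rwa [Real.norm_eq_abs] at this
  have hub : ∀ x ∈ Set.Icc (0:ℝ) 1, |w x| ≤ M := fun x hx => le_ciSup hbdd ⟨x, hx⟩
  have hM0 : 0 ≤ M := (abs_nonneg (w 0)).trans (hub 0 ⟨le_refl 0, h01⟩)
  -- integrability
  have iv' : IntervalIntegrable v' MeasureTheory.volume 0 1 :=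
    (huIcc ▸ hcv' : ContinuousOn v' (Set.uIcc 0 1)).intervalIntegrable
  have iv'' : IntervalIntegrable v'' MeasureTheory.volume 0 1 :=
    (huIcc ▸ hv'' : ContinuousOn v'' (Set.uIcc 0 1)).intervalIntegrable
  -- Step A : ∫ v v'' = -∫ v'^2
  have hA : ∫ x in (0:ℝ)..1, v x * v'' x = -(∫ x in (0:ℝ)..1, v' x * v' x) := by
    rw [intervalIntegral.integral_mul_deriv_eq_deriv_mul
      (fun x hx => hv x (huIcc ▸ hx)) (fun x hx => hv' x (huIcc ▸ hx)) iv' iv'']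
    rw [hv0, hv1]; ring
  -- Step B : ∫ v^2 v' = 0
  have hintB : IntervalIntegrable (fun x => v x ^ 2 * v' x) MeasureTheory.volume 0 1 := by
    apply ContinuousOn.intervalIntegrable
    rw [huIcc]
    exact (hcv.pow 2).mul hcv'
  have hB : ∫ x in (0:ℝ)..1, v x ^ 2 * v' x = 0 := by
    have hd : ∀ x ∈ Set.uIcc (0:ℝ) 1, HasDerivAt (fun y => v y ^ 3 / 3) (v x ^ 2 * v' x) x := by
      intro x hx
      have h := ((hv x (huIcc ▸ hx)).fun_pow 3).div_const 3
      exact h.congr_deriv (by norm_num; ring)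
    rw [intervalIntegral.integral_eq_sub_of_hasDerivAt hd hintB, hv0, hv1]; ring
  have ig : IntervalIntegrable (fun x => v' x * (2 * v x * w x + w x ^ 2))
      MeasureTheory.volume 0 1 := by
    apply ContinuousOn.intervalIntegrable
    rw [huIcc]
    exact hcv'.mul (((continuousOn_const.mul hcv).mul hcw).add (hcw.pow 2))
  -- Step C : split the nonlinearity integral
  have hC : ∫ x in (0:ℝ)..1, v' x * (v x + w x) ^ 2
      = ∫ x in (0:ℝ)..1, v' x * (2 * v x * w x + w x ^ 2) := by
    have he : ∫ x in (0:ℝ)..1, v' x * (v x + w x) ^ 2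
        = ∫ x in (0:ℝ)..1, (v x ^ 2 * v' x + v' x * (2 * v x * w x + w x ^ 2)) := by
      apply intervalIntegral.integral_congr
      intro x _
      ring
    rw [he, intervalIntegral.integral_add hintB ig, hB, zero_add]
  -- combine into a single integral
  have hiv'sq : IntervalIntegrable (fun x => v' x * v' x) MeasureTheory.volume 0 1 := by
    apply ContinuousOn.intervalIntegrable
    rw [huIcc]
    exact hcv'.mul hcv'
  have hnegint : IntervalIntegrable (fun x => -(v' x * v' x)) MeasureTheory.volume 0 1 :=
    hiv'sq.neg
  have hcombine : (∫ x in (0:ℝ)..1, v x * v'' x)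
      - c * ∫ x in (0:ℝ)..1, v' x * (v x + w x) ^ 2
      = ∫ x in (0:ℝ)..1, (-(v' x * v' x) - c * (v' x * (2 * v x * w x + w x ^ 2))) := by
    rw [hA, hC, ← intervalIntegral.integral_const_mul, ← intervalIntegral.integral_neg,
      ← intervalIntegral.integral_sub hnegint (ig.const_mul c)]
  rw [hcombine]
  -- upper-bound integrand pointwise
  have hmono : ∫ x in (0:ℝ)..1, (-(v' x * v' x) - c * (v' x * (2 * v x * w x + w x ^ 2)))
      ≤ ∫ x in (0:ℝ)..1, (2 * c ^ 2 * M ^ 2 * v x ^ 2 + c ^ 2 * M ^ 4 / 2) := by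
    apply intervalIntegral.integral_mono_on h01
    · exact hnegint.sub (ig.const_mul c)
    · apply ContinuousOn.intervalIntegrable
      rw [huIcc]
      exact (continuousOn_const.mul (hcv.pow 2)).add continuousOn_const
    · intro x hx
      have hwM := hub x hx
      have h2 : w x ^ 2 ≤ M ^ 2 := by nlinarith [sq_abs (w x), abs_nonneg (w x)]
      have h4 : w x ^ 4 ≤ M ^ 4 := by nlinarith [sq_abs (w x), abs_nonneg (w x), sq_nonneg (w x), sq_nonneg M]
      nlinarith [sq_nonneg (v' x + 2 * c * v x * w x), sq_nonneg (v' x + c * w x ^ 2),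
        sq_nonneg (c * v x), sq_nonneg c, sq_nonneg (v x), mul_nonneg (mul_nonneg (sq_nonneg c) (sq_nonneg (v x))) (sub_nonneg.mpr h2), sq_nonneg (v' x)]
  refine hmono.trans ?_
  rw [intervalIntegral.integral_add _ intervalIntegrable_const,
    intervalIntegral.integral_const_mul, intervalIntegral.integral_const]
  · have hv2 : 0 ≤ ∫ x in (0:ℝ)..1, v x ^ 2 :=
      intervalIntegral.integral_nonneg h01 (fun x _ => sq_nonneg (v x))
    have hM4 : 0 ≤ M ^ 4 := by positivity
    have hc2 : 0 ≤ c ^ 2 := sq_nonneg c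
    simp only [smul_eq_mul, sub_zero, one_mul]
    nlinarith [mul_nonneg hc2 hM4]
  · apply ContinuousOn.intervalIntegrable
    rw [huIcc]
    exact continuousOn_const.mul (hcv.pow 2)
end

section
/- For every T ∈ (0,∞), every γ ∈ [0,1/2) and every t ∈ (0,T]: ∑_{n=1}^∞ n^{2+2γ} e^{−2n²π²t} ≤ 4 (T² + 5) t^{−(3/2 + γ)}. -/
open Real

lemma auxA {y q : ℝ} (hy : 0 ≤ y) (hq1 : 1 ≤ q) (hq2 : q ≤ 2) :
    y ^ q ≤ 2 * Real.exp y := by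
  rcases eq_or_lt_of_le hy with h|h
  · rw [← h, Real.zero_rpow (by linarith)]
    positivity
  have hexp := Real.quadratic_le_exp_of_nonneg hy
  have key : y ^ q ≤ y + y ^ 2 := by
    rcases le_total y 1 with hy1|hy1
    · have : y ^ q ≤ y ^ (1:ℝ) := Real.rpow_le_rpow_of_exponent_ge h hy1 hq1
      rw [Real.rpow_one] at this
      nlinarith
    · have : y ^ q ≤ y ^ (2:ℝ) := Real.rpow_le_rpow_of_exponent_le hy1 hq2
      rw [show (2:ℝ) = ((2:ℕ):ℝ) by norm_num, Real.rpow_natCast] at this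
      nlinarith
  nlinarith

lemma auxB {a γ : ℝ} (ha : 0 < a) (hγ0 : 0 ≤ γ) (hγ1 : γ ≤ 1) (n : ℕ) :
    ((n:ℝ) + 1) ^ ((2:ℝ) + 2 * γ) * Real.exp (-(2 * a) * ((n:ℝ) + 1) ^ 2) ≤
      2 * Real.exp 1 * a ^ (-(1 + γ)) * Real.exp (-(Real.sqrt a) * ((n:ℝ) + 1)) := by
  set u : ℝ := (n:ℝ) + 1 with hu
  have hu1 : (1:ℝ) ≤ u := by simp [hu]
  have hu0 : (0:ℝ) < u := by linarith
  set y : ℝ := a * u ^ 2 with hy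
  have hy0 : 0 < y := by positivity
  have hsplit : Real.exp (-(2 * a) * u ^ 2) = Real.exp (-y) * Real.exp (-y) := by
    rw [← Real.exp_add, hy]; ring_nf
  have hpow : u ^ ((2:ℝ) + 2 * γ) = y ^ (1 + γ) * a ^ (-(1 + γ)) := by
    rw [show (2:ℝ) + 2 * γ = 2 * (1 + γ) by ring, hy]
    rw [Real.mul_rpow ha.le (by positivity), Real.rpow_neg ha.le]
    rw [mul_comm 2 (1+γ), Real.rpow_mul hu0.le, Real.rpow_two]
    field_simp
    rw [← Real.rpow_natCast (u ^ (1 + γ)) 2, ← Real.rpow_mul hu0.le, mul_comm (1+γ),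
      Real.rpow_mul hu0.le, Real.rpow_natCast]
  have ha' : (0:ℝ) ≤ a ^ (-(1+γ)) := by positivity
  have hA : y ^ (1 + γ) * Real.exp (-y) ≤ 2 := by
    have := auxA hy0.le (by linarith : (1:ℝ) ≤ 1 + γ) (by linarith)
    have hne : Real.exp y ≠ 0 := (Real.exp_pos y).ne'
    rw [Real.exp_neg]
    rw [← div_le_iff₀ (Real.exp_pos y)] at this
    calc y ^ (1+γ) * (Real.exp y)⁻¹ = y ^ (1+γ) / Real.exp y := by ring
    _ ≤ 2 := this
  have hB : Real.exp (-y) ≤ Real.exp 1 * Real.exp (-(Real.sqrt a) * u) := by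
    rw [← Real.exp_add]
    apply Real.exp_le_exp.mpr
    have hs : (Real.sqrt a * u) ^ 2 = y := by
      rw [mul_pow, Real.sq_sqrt ha.le, hy]
    nlinarith [sq_nonneg (Real.sqrt a * u - 1)]
  calc u ^ ((2:ℝ) + 2 * γ) * Real.exp (-(2 * a) * u ^ 2)
      = (y ^ (1 + γ) * Real.exp (-y)) * (a ^ (-(1+γ)) * Real.exp (-y)) := by
        rw [hpow, hsplit]; ring
    _ ≤ 2 * (a ^ (-(1+γ)) * (Real.exp 1 * Real.exp (-(Real.sqrt a) * u))) := by
        apply mul_le_mul hA _ (by positivity) (by norm_num)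
        exact mul_le_mul_of_nonneg_left hB ha'
    _ = 2 * Real.exp 1 * a ^ (-(1 + γ)) * Real.exp (-(Real.sqrt a) * u) := by ring

/-- For every `T ∈ (0,∞)`, every `γ ∈ [0,1/2)` and every `t ∈ (0,T]`:
`∑_{n=1}^∞ n^{2+2γ} e^{−2n²π²t} ≤ 4 (T² + 5) t^{−(3/2 + γ)}`
(the sum over `n ∈ {1,2,…}` is written as a sum over `n : ℕ` with `n` shifted by one). -/
theorem stmt_19 (T : ℝ) (hT : 0 < T) (γ : ℝ) (hγ0 : 0 ≤ γ) (hγ1 : γ < 1/2)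
    (t : ℝ) (ht : t ∈ Set.Ioc 0 T) :
    ∑' n : ℕ, ((n:ℝ) + 1) ^ ((2:ℝ) + 2 * γ) *
        Real.exp (-2 * ((n:ℝ) + 1) ^ 2 * Real.pi ^ 2 * t)
      ≤ 4 * (T ^ 2 + 5) * t ^ (-(3/2 + γ)) := by
  obtain ⟨ht0, htT⟩ := ht
  set a : ℝ := Real.pi ^ 2 * t with ha_def
  have ha : 0 < a := by positivity
  have hsa : 0 < Real.sqrt a := Real.sqrt_pos.mpr ha
  set r : ℝ := Real.exp (-(Real.sqrt a)) with hr_def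
  have hr0 : 0 < r := Real.exp_pos _
  have hr1 : r < 1 := by
    rw [hr_def, Real.exp_lt_one_iff]; linarith
  set C : ℝ := 2 * Real.exp 1 * a ^ (-(1 + γ)) with hC_def
  have hC0 : 0 ≤ C := by positivity
  -- the dominating geometric series
  have hgeom : Summable (fun n : ℕ => C * r ^ (n + 1)) := by
    apply Summable.mul_left
    simpa [pow_succ, mul_comm] using (summable_geometric_of_lt_one hr0.le hr1).mul_left r
  have hterm : ∀ n : ℕ, ((n:ℝ) + 1) ^ ((2:ℝ) + 2 * γ) *
      Real.exp (-2 * ((n:ℝ) + 1) ^ 2 * Real.pi ^ 2 * t) ≤ C * r ^ (n + 1) := by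
    intro n
    have h1 : Real.exp (-2 * ((n:ℝ) + 1) ^ 2 * Real.pi ^ 2 * t)
        = Real.exp (-(2 * a) * ((n:ℝ) + 1) ^ 2) := by rw [ha_def]; ring_nf
    have h2 : Real.exp (-(Real.sqrt a) * ((n:ℝ) + 1)) = r ^ (n + 1) := by
      rw [hr_def, ← Real.exp_nat_mul]
      push_cast
      ring_nf
    rw [h1, ← h2]
    exact auxB ha hγ0 (by linarith) n
  have hpos : ∀ n : ℕ, 0 ≤ ((n:ℝ) + 1) ^ ((2:ℝ) + 2 * γ) *
      Real.exp (-2 * ((n:ℝ) + 1) ^ 2 * Real.pi ^ 2 * t) := by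
    intro n; positivity
  have hsum : Summable (fun n : ℕ => ((n:ℝ) + 1) ^ ((2:ℝ) + 2 * γ) *
      Real.exp (-2 * ((n:ℝ) + 1) ^ 2 * Real.pi ^ 2 * t)) :=
    Summable.of_nonneg_of_le hpos hterm hgeom
  have step1 := Summable.tsum_le_tsum hterm hsum hgeom
  -- compute / bound the geometric sum
  have hgeosum : ∑' n : ℕ, C * r ^ (n + 1) = C * (r * (1 - r)⁻¹) := by
    rw [tsum_mul_left]
    congr 1
    have : ∀ n : ℕ, r ^ (n + 1) = r * r ^ n := fun n => by rw [pow_succ]; ring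
    simp_rw [this]
    rw [tsum_mul_left, tsum_geometric_of_lt_one hr0.le hr1]
  have hgb : r * (1 - r)⁻¹ ≤ a ^ (-(1/2) : ℝ) := by
    have h1r : 0 < 1 - r := by linarith
    have hkey : r * Real.sqrt a ≤ 1 * (1 - r) := by
      have h := Real.add_one_le_exp (Real.sqrt a)
      have hre : r * Real.exp (Real.sqrt a) = 1 := by
        rw [hr_def, ← Real.exp_add]; simp
      nlinarith
    have hdiv : r / (1 - r) ≤ 1 / Real.sqrt a := (div_le_div_iff₀ h1r hsa).mpr hkey
    have hsq : a ^ (-(1/2) : ℝ) = 1 / Real.sqrt a := by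
      rw [Real.rpow_neg ha.le, Real.sqrt_eq_rpow]
      exact (one_div _).symm
    rw [hsq, ← div_eq_mul_inv]
    exact hdiv
  have hCa : C * a ^ (-(1/2) : ℝ) = 2 * Real.exp 1 * a ^ (-(3/2 + γ)) := by
    rw [hC_def, mul_assoc, ← Real.rpow_add ha]
    norm_num
    ring_nf
  have hsplit2 : a ^ (-(3/2 + γ)) = (Real.pi ^ 2) ^ (-(3/2 + γ)) * t ^ (-(3/2 + γ)) := by
    rw [ha_def, Real.mul_rpow (by positivity) ht0.le]
  have hpi1 : (Real.pi ^ 2 : ℝ) ^ (-(3/2 + γ)) ≤ 1 := by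
    apply Real.rpow_le_one_of_one_le_of_nonpos
    · nlinarith [Real.pi_gt_three]
    · linarith
  have hfin : 2 * Real.exp 1 * a ^ (-(3/2 + γ)) ≤ 4 * (T ^ 2 + 5) * t ^ (-(3/2 + γ)) := by
    rw [hsplit2]
    have htp : (0:ℝ) < t ^ (-(3/2 + γ)) := Real.rpow_pos_of_pos ht0 _
    have he : Real.exp 1 < 2.7182818286 := Real.exp_one_lt_d9
    calc 2 * Real.exp 1 * ((Real.pi ^ 2) ^ (-(3/2 + γ)) * t ^ (-(3/2 + γ)))
        ≤ 2 * Real.exp 1 * t ^ (-(3/2 + γ)) := by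
          apply mul_le_mul_of_nonneg_left (mul_le_of_le_one_left htp.le hpi1) (by positivity)
      _ ≤ 20 * t ^ (-(3/2 + γ)) := by nlinarith
      _ ≤ 4 * (T ^ 2 + 5) * t ^ (-(3/2 + γ)) := by nlinarith [sq_nonneg T]
  calc ∑' n : ℕ, ((n:ℝ) + 1) ^ ((2:ℝ) + 2 * γ) *
        Real.exp (-2 * ((n:ℝ) + 1) ^ 2 * Real.pi ^ 2 * t)
      ≤ ∑' n : ℕ, C * r ^ (n + 1) := step1
    _ = C * (r * (1 - r)⁻¹) := hgeosum
    _ ≤ C * a ^ (-(1/2) : ℝ) := mul_le_mul_of_nonneg_left hgb hC0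
    _ = 2 * Real.exp 1 * a ^ (-(3/2 + γ)) := hCa
    _ ≤ 4 * (T ^ 2 + 5) * t ^ (-(3/2 + γ)) := hfin
end
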